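/- arXiv:1804.10203 — 7 statements merged into one kernel-verified Lean document; each statement's English description precedes it below -/
import Mathlib

section
/- If p is a complex polynomial of degree n, then max_{|z|=1} |p'(z)| ≤ n · max_{|z|=1} |p(z)|. -/
open Polynomial Metric

noncomputable def polyMaxOn (p : Polynomial ℂ) (r : ℝ) : ℝ :=
  sSup ((fun z => ‖p.eval z‖) '' sphere (0 : ℂ) r)

lemma bern_bddAbove (p : ℂ[X]) :
    BddAbove ((fun z => ‖p.eval z‖) '' sphere (0:ℂ) 1) :=
  ((isCompact_sphere (0:ℂ) 1).image (continuous_norm.comp p.continuous)).bddAbove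

lemma bern_le_maxOn (p : ℂ[X]) {z : ℂ} (hz : ‖z‖ = 1) :
    ‖p.eval z‖ ≤ polyMaxOn p 1 :=
  le_csSup (bern_bddAbove p) ⟨z, by simpa [mem_sphere_zero_iff_norm] using hz, rfl⟩

lemma bern_sphere_infinite : (sphere (0:ℂ) 1).Infinite := by
  have hinj : Set.InjOn (fun x : ℝ => (⟨x, Real.sqrt (1 - x^2)⟩ : ℂ)) (Set.Icc (-1:ℝ) 1) :=
    fun a _ b _ hab => congrArg Complex.re hab
  have hmaps : Set.MapsTo (fun x : ℝ => (⟨x, Real.sqrt (1 - x^2)⟩ : ℂ)) (Set.Icc (-1:ℝ) 1)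
      (sphere (0:ℂ) 1) := by
    intro x hx
    have h1 : 0 ≤ 1 - x^2 := by nlinarith [hx.1, hx.2]
    have : ‖(⟨x, Real.sqrt (1-x^2)⟩:ℂ)‖ = 1 := by
      rw [Complex.norm_def, Complex.normSq_mk, Real.mul_self_sqrt h1]
      rw [show x * x + (1 - x^2) = 1 by ring, Real.sqrt_one]
    simpa [mem_sphere_zero_iff_norm] using this
  exact Set.infinite_of_injOn_mapsTo hinj hmaps
    (Set.infinite_coe_iff.1 (Set.Icc.infinite (by norm_num)))

lemma bern_maxOn_pos {p : ℂ[X]} (hp : p ≠ 0) : 0 < polyMaxOn p 1 := by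
  obtain ⟨z, hz, hz0⟩ : ∃ z ∈ sphere (0:ℂ) 1, p.eval z ≠ 0 := by
    by_contra h; push_neg at h
    exact bern_sphere_infinite ((finite_setOf_isRoot hp).subset (fun z hz => h z hz))
  have h1 : ‖z‖ = 1 := by simpa [mem_sphere_zero_iff_norm] using hz
  exact lt_of_lt_of_le (norm_pos_iff.mpr hz0) (bern_le_maxOn p h1)

lemma bern_growth (p : ℂ[X]) {z : ℂ} (hz : 1 ≤ ‖z‖) :
    ‖p.eval z‖ ≤ polyMaxOn p 1 * ‖z‖ ^ p.natDegree := by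
  have hq : ∀ w : ℂ, ‖w‖ ≤ 1 → ‖(reverse p).eval w‖ ≤ polyMaxOn p 1 := by
    intro w hw
    have hfr : ∀ w' ∈ frontier (ball (0:ℂ) 1), ‖(reverse p).eval w'‖ ≤ polyMaxOn p 1 := by
      intro w' hw'
      rw [frontier_ball (0:ℂ) one_ne_zero, mem_sphere_zero_iff_norm] at hw'
      have hw'0 : w' ≠ 0 := by intro h; rw [h] at hw'; simp at hw'
      have : Invertible (w'⁻¹) := invertibleOfNonzero (inv_ne_zero hw'0)
      have hid := eval₂_reverse_mul_pow (RingHom.id ℂ) (w'⁻¹) p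
      rw [invOf_eq_inv, inv_inv] at hid
      have habs : ‖w'⁻¹‖ = 1 := by
        rw [norm_inv, hw']; norm_num
      have : ‖(reverse p).eval w'‖ * ‖w'⁻¹‖ ^ p.natDegree
          = ‖p.eval w'⁻¹‖ := by
        rw [← norm_pow, ← norm_mul]; exact congrArg norm hid
      rw [habs, one_pow, mul_one] at this
      rw [this]
      exact bern_le_maxOn p habs
    have := Complex.norm_le_of_forall_mem_frontier_norm_le (U := ball (0:ℂ) 1)
      isBounded_ball ((reverse p).differentiable.diffContOnCl) hfr
      (z := w) (by rw [closure_ball (0:ℂ) one_ne_zero, mem_closedBall_zero_iff]; exact hw)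
    simpa using this
  have hz0 : z ≠ 0 := by
    intro h; rw [h] at hz; simp at hz; linarith
  have : Invertible z := invertibleOfNonzero hz0
  have hid := eval₂_reverse_mul_pow (RingHom.id ℂ) z p
  rw [invOf_eq_inv] at hid
  have habs : ‖p.eval z‖
      = ‖(reverse p).eval z⁻¹‖ * ‖z‖ ^ p.natDegree := by
    rw [← norm_pow, ← norm_mul]; exact (congrArg norm hid).symm
  rw [habs]
  have hinv : ‖z⁻¹‖ ≤ 1 := by
    rw [norm_inv]; exact inv_le_one_of_one_le₀ hz
  exact mul_le_mul_of_nonneg_right (hq _ hinv) (by positivity)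


lemma bern_deriv_prod_eval (t : Multiset ℂ) (z : ℂ) (h : ∀ r ∈ t, z ≠ r) :
    (derivative (t.map (fun r => X - C r)).prod).eval z
      = ((t.map (fun r => X - C r)).prod).eval z * (t.map (fun r => (z - r)⁻¹)).sum := by
  induction t using Multiset.induction with
  | empty => simp
  | cons a s ih =>
    have hz : ∀ r ∈ s, z ≠ r := fun r hr => h r (Multiset.mem_cons_of_mem hr)
    have ha : z - a ≠ 0 := sub_ne_zero.mpr (h a (Multiset.mem_cons_self a s))
    have hP : ((s.map (fun r => X - C r)).prod).eval z ≠ 0 := by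
      rw [eval_multiset_prod]
      simp only [Multiset.map_map, Function.comp]
      refine Multiset.prod_ne_zero ?_
      simp only [Multiset.mem_map]
      rintro ⟨r, hr, hzr⟩
      exact sub_ne_zero.mpr (hz r hr) (by simpa using hzr)
    simp only [Multiset.map_cons, Multiset.prod_cons, Multiset.sum_cons, derivative_mul,
      derivative_sub, derivative_X, derivative_C, sub_zero, eval_add, eval_mul, eval_sub,
      eval_X, eval_C, eval_one, one_mul, ih hz]
    field_simp

lemma bern_gl {g : ℂ[X]} (hg : g ≠ 0) (hdeg : 1 ≤ g.natDegree)
    (hroots : ∀ r : ℂ, g.IsRoot r → ‖r‖ < 1)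
    {z : ℂ} (hz : 1 ≤ ‖z‖) : (derivative g).eval z ≠ 0 := by
  have hsplit := (IsAlgClosed.splits g).eq_prod_roots
  set t := g.roots with ht
  have hzr : ∀ r ∈ t, z ≠ r := by
    intro r hr hzr
    have := hroots r ((mem_roots hg).1 hr)
    rw [← hzr] at this
    exact absurd hz (not_le.2 this)
  have hne : g.eval z ≠ 0 := fun h => absurd hz (not_le.2 (hroots z h))
  set S : ℂ := (t.map (fun r => (z - r)⁻¹)).sum with hS
  have hgz : (derivative g).eval z = g.eval z * S := by
    conv_lhs => rw [hsplit]
    rw [derivative_C_mul, eval_mul, eval_C, bern_deriv_prod_eval t z hzr]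
    conv_rhs => rw [hsplit]
    rw [eval_mul, eval_C]
    ring
  rw [hgz]
  refine mul_ne_zero hne ?_
  -- show S ≠ 0 via Re (z * S) > 0
  have hcard : t ≠ 0 := by
    have := (splits_iff_card_roots (f := g)).1 (IsAlgClosed.splits g)
    intro h0
    rw [← ht, h0] at this
    simp at this
    omega
  have habs : ∀ r ∈ t, 0 < (z * (z - r)⁻¹).re := by
    intro r hr
    have hrlt : ‖r‖ < 1 := hroots r ((mem_roots hg).1 hr)
    have hw : z - r ≠ 0 := sub_ne_zero.mpr (hzr r hr)
    rw [Complex.inv_def, ← mul_assoc]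
    have hre : (z * starRingEnd ℂ (z - r) * ((Complex.normSq (z - r))⁻¹ : ℝ)).re
        = (z * starRingEnd ℂ (z - r)).re * (Complex.normSq (z - r))⁻¹ := by
      simp [Complex.mul_re]
    rw [hre]
    have hpos : 0 < (Complex.normSq (z - r))⁻¹ := inv_pos.2 (Complex.normSq_pos.2 hw)
    refine mul_pos ?_ hpos
    have h1 : z * starRingEnd ℂ (z - r) = (Complex.normSq z : ℂ) - z * starRingEnd ℂ r := by
      rw [map_sub, mul_sub, Complex.mul_conj]
    rw [h1]
    have h2 : ((Complex.normSq z : ℂ) - z * starRingEnd ℂ r).re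
        = Complex.normSq z - (z * starRingEnd ℂ r).re := by simp
    rw [h2]
    have h3 : (z * starRingEnd ℂ r).re ≤ ‖z‖ * ‖r‖ := by
      calc (z * starRingEnd ℂ r).re ≤ ‖z * starRingEnd ℂ r‖ := Complex.re_le_norm _
        _ = ‖z‖ * ‖r‖ := by rw [norm_mul, Complex.norm_conj]
    have h4 : Complex.normSq z = ‖z‖ * ‖z‖ := by rw [Complex.normSq_eq_norm_sq]; ring
    nlinarith [hz, hrlt, norm_nonneg r]
  intro hS0
  have hzS : z * S = 0 := by rw [hS0, mul_zero]
  have : (z * S).re = (t.map (fun r => (z * (z - r)⁻¹).re)).sum := by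
    rw [hS, ← Multiset.sum_map_mul_left]
    exact (map_multiset_sum Complex.reAddGroupHom _).trans (by rw [Multiset.map_map]; rfl)
  rw [hzS] at this
  obtain ⟨a, ha⟩ := Multiset.exists_mem_of_ne_zero hcard
  obtain ⟨u, hu⟩ := Multiset.exists_cons_of_mem (Multiset.mem_map_of_mem (fun r => (z * (z - r)⁻¹).re) ha)
  rw [hu, Multiset.sum_cons] at this
  have h5 : 0 ≤ u.sum := Multiset.sum_nonneg (by
    intro x hx
    have : x ∈ Multiset.map (fun r => (z * (z - r)⁻¹).re) t := by
      rw [hu]; exact Multiset.mem_cons_of_mem hx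
    obtain ⟨r, hr, rfl⟩ := Multiset.mem_map.1 this
    exact (habs r hr).le)
  have h6 : 0 < (z * (z - a)⁻¹).re := habs a ha
  simp only [Complex.zero_re] at this
  linarith

theorem bernstein_polynomial_inequality (p : Polynomial ℂ) (n : ℕ) (hn : 1 ≤ n) (hdeg : p.natDegree = n) :
    polyMaxOn (derivative p) 1 ≤ n * polyMaxOn p 1 := by
  have hp0 : p ≠ 0 := by
    intro h
    rw [h, natDegree_zero] at hdeg
    omega
  set M := polyMaxOn p 1 with hM
  have hMpos : 0 < M := bern_maxOn_pos hp0
  have hnpos : (0:ℝ) < n := by exact_mod_cast hn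
  have key : ∀ z₀ : ℂ, ‖z₀‖ = 1 → ‖(derivative p).eval z₀‖ ≤ n * M := by
    intro z₀ habs
    by_contra hcon
    push_neg at hcon
    have hz0ne : z₀ ≠ 0 := by
      intro h; rw [h] at habs; simp at habs
    have hzpow : ‖z₀ ^ (n-1)‖ = 1 := by rw [norm_pow, habs, one_pow]
    have hden : ((n : ℂ) * (M:ℂ) * z₀ ^ (n - 1)) ≠ 0 := by
      refine mul_ne_zero (mul_ne_zero ?_ ?_) (pow_ne_zero _ hz0ne)
      · exact Nat.cast_ne_zero.mpr (by omega)
      · exact_mod_cast hMpos.ne'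
    set lam : ℂ := (derivative p).eval z₀ / ((n : ℂ) * (M:ℂ) * z₀ ^ (n - 1)) with hlam
    have hlamabs : 1 < ‖lam‖ := by
      rw [hlam, norm_div, norm_mul, norm_mul, hzpow, mul_one, Complex.norm_natCast,
        Complex.norm_real, Real.norm_eq_abs, abs_of_pos hMpos]
      rw [lt_div_iff₀ (by positivity), one_mul]
      exact hcon
    set c : ℂ := (M : ℂ) * lam with hc
    have hcabs : ‖c‖ = M * ‖lam‖ := by
      rw [hc, norm_mul, Complex.norm_real, Real.norm_eq_abs, abs_of_pos hMpos]
    set g : ℂ[X] := C c * X ^ n - p with hg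
    have hgz : ∀ z : ℂ, 1 ≤ ‖z‖ → g.eval z ≠ 0 := by
      intro z hz hzero
      rw [hg] at hzero
      simp only [eval_sub, eval_mul, eval_C, eval_pow, eval_X, sub_eq_zero] at hzero
      have h2 := bern_growth p hz
      rw [hdeg, ← hM] at h2
      rw [← hzero, norm_mul, norm_pow, hcabs] at h2
      have hzp : (1:ℝ) ≤ ‖z‖ ^ n := one_le_pow₀ hz
      have tpos : (0:ℝ) < ‖z‖ ^ n := lt_of_lt_of_le one_pos hzp
      nlinarith [mul_pos (mul_pos hMpos tpos) (sub_pos.mpr hlamabs)]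
    have hgne : g ≠ 0 := by
      intro h
      exact hgz 1 (by simp) (by rw [h]; simp)
    have hroots : ∀ r : ℂ, g.IsRoot r → ‖r‖ < 1 := by
      intro r hr
      by_contra h
      push_neg at h
      exact hgz r h hr
    have hderiv : (derivative g).eval z₀ = 0 := by
      rw [hg]
      rw [derivative_sub, derivative_C_mul, derivative_X_pow]
      simp only [eval_sub, eval_mul, eval_C, eval_pow, eval_X, eval_natCast]
      rw [hc, hlam]
      have hM0 : (M:ℂ) ≠ 0 := by exact_mod_cast hMpos.ne'
      have hn0 : (n:ℂ) ≠ 0 := Nat.cast_ne_zero.mpr (by omega)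
      field_simp
      ring
    rcases Nat.eq_zero_or_pos g.natDegree with h0 | hpos
    · -- g is a nonzero constant c0; derive |p z| > M on sphere
      have hgc : g = C (g.coeff 0) := eq_C_of_natDegree_eq_zero h0
      set c0 : ℂ := g.coeff 0 with hc0
      have hc0ne : c0 ≠ 0 := by
        intro h
        apply hgz 1 (by simp)
        rw [hgc, h]; simp
      have hpeq : ∀ z : ℂ, p.eval z = c * z ^ n - c0 := by
        intro z
        have : g.eval z = c0 := by rw [hgc]; simp
        rw [hg] at this
        simp only [eval_sub, eval_mul, eval_C, eval_pow, eval_X] at this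
        linear_combination -this
      -- choose u on unit circle with c * u = -(|c|/|c0|) * c0
      set u : ℂ := -(starRingEnd ℂ c) * c0 * (((‖c‖)⁻¹ * (‖c0‖)⁻¹ : ℝ) : ℂ) with hu
      have hcne : c ≠ 0 := by
        rw [hc]; exact mul_ne_zero (by exact_mod_cast hMpos.ne') (by
          intro h; rw [h] at hlamabs; simp at hlamabs; linarith)
      have huabs : ‖u‖ = 1 := by
        rw [hu, norm_mul, norm_mul, norm_neg, Complex.norm_conj, Complex.norm_real, Real.norm_eq_abs]
        rw [abs_of_pos (mul_pos (inv_pos.2 (norm_pos_iff.mpr hcne)) (inv_pos.2 (norm_pos_iff.mpr hc0ne)))]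
        field_simp
      obtain ⟨z, hzpow'⟩ := IsAlgClosed.exists_pow_nat_eq u hn
      have hzabs : ‖z‖ = 1 := by
        have hpow1 : ‖z‖ ^ n = 1 := by rw [← norm_pow, hzpow', huabs]
        rcases lt_trichotomy (‖z‖) 1 with h | h | h
        · exfalso
          have := pow_lt_one₀ (norm_nonneg z) h (n := n) (by omega)
          rw [hpow1] at this; exact lt_irrefl _ this
        · exact h
        · exfalso
          have := one_lt_pow₀ h (n := n) (by omega)
          rw [hpow1] at this; exact lt_irrefl _ this
      set t : ℝ := (‖c‖)⁻¹ * (‖c0‖)⁻¹ with htdef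
      have key2 : c * u - c0 = -c0 * (((Complex.normSq c * t : ℝ) : ℂ) + 1) := by
        rw [hu]; push_cast; linear_combination (-c0 * (t:ℂ)) * (Complex.mul_conj c)
      have habs2 : ‖p.eval z‖ = ‖c‖ + ‖c0‖ := by
        rw [hpeq z, hzpow', key2]
        have ht0 : (0:ℝ) ≤ t := by
          rw [htdef]; positivity
        have hnn : (0:ℝ) ≤ Complex.normSq c * t + 1 := by nlinarith [Complex.normSq_nonneg c]
        rw [show (((Complex.normSq c * t : ℝ) : ℂ) + 1) = ((Complex.normSq c * t + 1 : ℝ) : ℂ) by push_cast; ring]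
        rw [norm_mul, norm_neg, Complex.norm_real, Real.norm_eq_abs, abs_of_nonneg hnn]
        rw [Complex.normSq_eq_norm_sq, htdef]
        have h1 : ‖c‖ ≠ 0 := norm_ne_zero_iff.mpr hcne
        have h2 : ‖c0‖ ≠ 0 := norm_ne_zero_iff.mpr hc0ne
        field_simp
      have hle := bern_le_maxOn p hzabs
      rw [habs2, hcabs] at hle
      nlinarith [norm_nonneg c0]
    · exact bern_gl hgne hpos hroots (le_of_eq habs.symm) hderiv
  refine Real.sSup_le ?_ (by positivity)
  rintro x ⟨z, hz, rfl⟩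
  exact key z (by simpa [mem_sphere_zero_iff_norm] using hz)
end

section
/- If p is a complex polynomial of degree n having no zero in the open unit disk, then max_{|z|=1} |p'(z)| ≤ (n/2) · [max_{|z|=1} |p(z)| − min_{|z|=1} |p(z)|]. -/
open Polynomial Metric

open Complex in

lemma re_bound (z : ℂ) (hz1 : ‖z‖ = 1) (s : Multiset ℂ)
    (hs : ∀ r ∈ s, 1 ≤ ‖r‖) :
    (z * (derivative (s.map (fun r => X - C r)).prod).eval z *
      (starRingEnd ℂ) ((s.map (fun r => X - C r)).prod.eval z)).re ≤
    (s.card / 2 : ℝ) * Complex.normSq ((s.map (fun r => X - C r)).prod.eval z) := by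
  induction s using Multiset.induction with
  | empty => simp
  | cons r t ih =>
    have hr : (1:ℝ) ≤ ‖r‖ := hs r (Multiset.mem_cons_self r t)
    have ht : ∀ x ∈ t, 1 ≤ ‖x‖ := fun x hx => hs x (Multiset.mem_cons_of_mem hx)
    set q : ℂ[X] := (t.map (fun r => X - C r)).prod with hq
    have hprod : ((r ::ₘ t).map (fun r => X - C r)).prod = (X - C r) * q := by
      rw [Multiset.map_cons, Multiset.prod_cons]
    rw [hprod]
    have hder : derivative ((X - C r) * q) = q + (X - C r) * derivative q := by
      rw [derivative_mul]; simp
    rw [hder]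
    have e1 : Complex.normSq (((X - C r) * q).eval z) =
        Complex.normSq (z - r) * Complex.normSq (q.eval z) := by
      simp [Complex.normSq_mul]
    rw [e1]
    have key1 : (z * (starRingEnd ℂ) (z - r)).re ≤ Complex.normSq (z - r) / 2 := by
      have hz2 : Complex.normSq z = 1 := by
        rw [← Complex.sq_norm, hz1]; norm_num
      have hr2 : (1:ℝ) ≤ Complex.normSq r := by
        rw [← Complex.sq_norm]; nlinarith
      have : Complex.normSq (z - r) = Complex.normSq z - 2 * (z * (starRingEnd ℂ) r).re
          + Complex.normSq r := by rw [Complex.normSq_sub]; ring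
      have h3 : (z * (starRingEnd ℂ) (z - r)).re =
          Complex.normSq z - (z * (starRingEnd ℂ) r).re := by
        rw [map_sub, mul_sub, Complex.sub_re, Complex.mul_conj]; simp
      rw [h3, hz2]
      linarith
    -- main algebraic expansion
    have e2 : z * (q + (X - C r) * derivative q).eval z *
        (starRingEnd ℂ) (((X - C r) * q).eval z)
        = (z * (starRingEnd ℂ) (z - r)) * ((q.eval z) * (starRingEnd ℂ) (q.eval z))
          + ((z - r) * (starRingEnd ℂ) (z - r)) *
            (z * (derivative q).eval z * (starRingEnd ℂ) (q.eval z)) := by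
      simp only [eval_add, eval_mul, eval_sub, eval_X, eval_C, map_mul, map_sub]
      ring
    rw [e2]
    have hc1 : ((q.eval z) * (starRingEnd ℂ) (q.eval z)) = (Complex.normSq (q.eval z) : ℂ) := by
      rw [Complex.mul_conj]
    have hc2 : ((z - r) * (starRingEnd ℂ) (z - r)) = (Complex.normSq (z - r) : ℂ) := by
      rw [Complex.mul_conj]
    rw [hc1, hc2, Complex.add_re]
    have r1 : ((z * (starRingEnd ℂ) (z - r)) * (Complex.normSq (q.eval z) : ℂ)).re
        = (z * (starRingEnd ℂ) (z - r)).re * Complex.normSq (q.eval z) := by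
      rw [Complex.mul_re]; simp
    have r2 : ((Complex.normSq (z - r) : ℂ) * (z * (derivative q).eval z *
        (starRingEnd ℂ) (q.eval z))).re
        = Complex.normSq (z - r) * (z * (derivative q).eval z *
          (starRingEnd ℂ) (q.eval z)).re := by
      rw [Complex.mul_re]; simp
    rw [r1, r2]
    have ihs := ih ht
    have hcard : ((r ::ₘ t).card : ℝ) = t.card + 1 := by
      rw [Multiset.card_cons]; push_cast; ring
    rw [hcard]
    have hnn : (0:ℝ) ≤ Complex.normSq (q.eval z) := Complex.normSq_nonneg _
    have hnn2 : (0:ℝ) ≤ Complex.normSq (z - r) := Complex.normSq_nonneg _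
    nlinarith [mul_le_mul_of_nonneg_left ihs hnn2]

open Complex in
lemma key_lemma (p : ℂ[X]) (n : ℕ) (hn : 1 ≤ n) (hdeg : p.natDegree = n)
    (hz : ∀ z : ℂ, p.eval z = 0 → 1 ≤ ‖z‖) (z : ℂ) (hz1 : ‖z‖ = 1) :
    ‖(derivative p).eval z‖ ≤
      ‖(n : ℂ) * p.eval z - z * (derivative p).eval z‖ := by
  have hp0 : p ≠ 0 := by
    intro h; rw [h] at hdeg; simp at hdeg; omega
  have hsplit : p.roots.card = p.natDegree :=
    (splits_iff_card_roots.mp (IsAlgClosed.splits p))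
  have hfact := C_leadingCoeff_mul_prod_multiset_X_sub_C hsplit
  set q : ℂ[X] := (p.roots.map (fun r => X - C r)).prod with hq
  have hroots : ∀ r ∈ p.roots, 1 ≤ ‖r‖ := by
    intro r hr
    exact hz r ((mem_roots hp0).mp hr)
  -- Re bound on p
  have hre : (z * (derivative p).eval z * (starRingEnd ℂ) (p.eval z)).re ≤
      (n / 2 : ℝ) * Complex.normSq (p.eval z) := by
    have hcard : (p.roots.card : ℝ) = n := by rw [hsplit, hdeg]
    have hb := re_bound z hz1 p.roots hroots
    rw [← hq, hcard] at hb
    have hpe : p.eval z = p.leadingCoeff * q.eval z := by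
      conv_lhs => rw [← hfact]
      simp
    have hpe' : (derivative p).eval z = p.leadingCoeff * (derivative q).eval z := by
      conv_lhs => rw [← hfact]
      rw [derivative_mul]
      simp
    rw [hpe, hpe']
    have e : z * (p.leadingCoeff * (derivative q).eval z) *
        (starRingEnd ℂ) (p.leadingCoeff * q.eval z)
        = (Complex.normSq p.leadingCoeff : ℂ) *
          (z * (derivative q).eval z * (starRingEnd ℂ) (q.eval z)) := by
      rw [map_mul, ← Complex.mul_conj]
      ring
    rw [e, Complex.normSq_mul]
    have : (((Complex.normSq p.leadingCoeff : ℂ)) * (z * (derivative q).eval z *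
        (starRingEnd ℂ) (q.eval z))).re = Complex.normSq p.leadingCoeff *
        (z * (derivative q).eval z * (starRingEnd ℂ) (q.eval z)).re := by
      rw [Complex.mul_re]; simp
    rw [this]
    nlinarith [Complex.normSq_nonneg p.leadingCoeff]
  -- conclude
  have hsq : Complex.normSq (z * (derivative p).eval z) ≤
      Complex.normSq ((n : ℂ) * p.eval z - z * (derivative p).eval z) := by
    rw [Complex.normSq_sub]
    have e : ((n : ℂ) * p.eval z * (starRingEnd ℂ) (z * (derivative p).eval z)).re
        = n * ((z * (derivative p).eval z * (starRingEnd ℂ) (p.eval z)).re) := by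
      have : ((n : ℂ) * p.eval z * (starRingEnd ℂ) (z * (derivative p).eval z))
          = (starRingEnd ℂ) ((n : ℂ) * (z * (derivative p).eval z * (starRingEnd ℂ) (p.eval z))) := by
        simp only [map_mul, Complex.conj_conj, Complex.conj_natCast]
        ring
      rw [this, Complex.conj_re]
      have := Complex.mul_re (n : ℂ) (z * (derivative p).eval z * (starRingEnd ℂ) (p.eval z))
      rw [this]; simp
    rw [e]
    have hnsq : Complex.normSq ((n:ℂ) * p.eval z) = (n:ℝ)^2 * Complex.normSq (p.eval z) := by
      rw [Complex.normSq_mul, Complex.normSq_natCast]; ring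
    nlinarith [Complex.normSq_nonneg (p.eval z), (show (0:ℝ) ≤ (n:ℝ) by positivity)]
  have habs : ‖z * (derivative p).eval z‖ = ‖(derivative p).eval z‖ := by
    rw [norm_mul, hz1, one_mul]
  rw [← habs]
  have := Real.sqrt_le_sqrt hsq
  rwa [← Complex.norm_def, ← Complex.norm_def] at this

open Complex in

lemma maxmod (p : ℂ[X]) {M : ℝ} (hM : ∀ w ∈ sphere (0:ℂ) 1, ‖p.eval w‖ ≤ M)
    {w : ℂ} (hw : ‖w‖ ≤ 1) : ‖p.eval w‖ ≤ M := by
  have hd : DiffContOnCl ℂ (fun z => p.eval z) (ball (0:ℂ) 1) :=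
    (p.differentiable.diffContOnCl)
  have hfr : frontier (ball (0:ℂ) 1) = sphere (0:ℂ) 1 := frontier_ball 0 one_ne_zero
  have := Complex.norm_le_of_forall_mem_frontier_norm_le (isBounded_ball) hd
    (C := M) (by rw [hfr]; exact fun z hz => hM z hz)
    (z := w) (by rw [closure_ball 0 one_ne_zero, mem_closedBall, dist_zero_right]; exact hw)
  exact this

lemma minmod (p : ℂ[X]) {m : ℝ} (hm : 0 < m) (hm' : ∀ w ∈ sphere (0:ℂ) 1, m ≤ ‖p.eval w‖)
    (hz : ∀ z : ℂ, p.eval z = 0 → 1 ≤ ‖z‖)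
    {w : ℂ} (hw : ‖w‖ ≤ 1) : m ≤ ‖p.eval w‖ := by
  have hne : ∀ z : ℂ, ‖z‖ ≤ 1 → p.eval z ≠ 0 := by
    intro z hz1 h0
    have h1 : 1 ≤ ‖z‖ := hz z h0
    have hzs : z ∈ sphere (0:ℂ) 1 := by
      simp [mem_sphere_iff_norm]; exact le_antisymm hz1 h1
    have := hm' z hzs
    rw [h0] at this; simp at this; linarith
  have hd : DiffContOnCl ℂ (fun z => (p.eval z)⁻¹) (ball (0:ℂ) 1) := by
    apply DifferentiableOn.diffContOnCl
    apply DifferentiableOn.inv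
    · exact p.differentiable.differentiableOn
    · intro z hzb
      rw [closure_ball 0 one_ne_zero, mem_closedBall, dist_zero_right] at hzb
      exact hne z hzb
  have hfr : frontier (ball (0:ℂ) 1) = sphere (0:ℂ) 1 := frontier_ball 0 one_ne_zero
  have hb := Complex.norm_le_of_forall_mem_frontier_norm_le (isBounded_ball) hd
    (C := m⁻¹) (by
      rw [hfr]; intro z hzz
      rw [norm_inv]
      exact inv_anti₀ hm (hm' z hzz))
    (z := w) (by rw [closure_ball 0 one_ne_zero, mem_closedBall, dist_zero_right]; exact hw)
  rw [norm_inv] at hb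
  have hpw : 0 < ‖p.eval w‖ := by
    simpa [norm_pos_iff] using (hne w hw)
  calc m = (m⁻¹)⁻¹ := by rw [inv_inv]
  _ ≤ (‖p.eval w‖⁻¹)⁻¹ := by
      apply inv_anti₀
      · simpa [norm_pos_iff] using hpw
      · exact hb
  _ = ‖p.eval w‖ := by rw [inv_inv]

open Complex in
-- unit direction
lemma unit_dir (A : ℂ) : ∃ u : ℂ, ‖u‖ = 1 ∧ A = (‖A‖ : ℂ) * u := by
  rcases eq_or_ne A 0 with h | h
  · exact ⟨1, by simp, by simp [h]⟩
  · refine ⟨A / ‖A‖, ?_, ?_⟩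
    · rw [norm_div, Complex.norm_real, norm_norm]
      field_simp [norm_ne_zero_iff.mpr h]
    · have hA0 : (‖A‖ : ℂ) ≠ 0 := by exact_mod_cast norm_ne_zero_iff.mpr h
      field_simp

-- Claim A
open Complex in
lemma claimA (p : ℂ[X]) (n : ℕ) (hn : 1 ≤ n) (hdeg : p.natDegree = n)
    (hz : ∀ z : ℂ, p.eval z = 0 → 1 ≤ ‖z‖) {m : ℝ} (hm0 : 0 ≤ m)
    (hm' : ∀ w ∈ sphere (0:ℂ) 1, m ≤ ‖p.eval w‖)
    (z : ℂ) (hzs : z ∈ sphere (0:ℂ) 1) :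
    ‖(derivative p).eval z‖ + n * m ≤
      ‖(n : ℂ) * p.eval z - z * (derivative p).eval z‖ := by
  have hz1 : ‖z‖ = 1 := by simpa [mem_sphere_iff_norm] using hzs
  set A : ℂ := (n : ℂ) * p.eval z - z * (derivative p).eval z with hA
  rcases eq_or_lt_of_le hm0 with h0 | hmpos
  · have := key_lemma p n hn hdeg hz z hz1
    rw [← h0]; simpa using this
  have hnm : (0:ℝ) < n * m := by positivity
  have habsnm : ‖(n:ℂ) * (m:ℂ)‖ = n * m := by
    rw [norm_mul, Complex.norm_natCast, Complex.norm_real, Real.norm_eq_abs, _root_.abs_of_nonneg hm0]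
  -- step 1
  have step1 : ∀ β : ℂ, ‖β‖ < 1 →
      ‖(derivative p).eval z‖ ≤ ‖A - (n : ℂ) * β * m‖ := by
    intro β hβ
    set P : ℂ[X] := p - C (β * m) with hP
    have hPdeg : P.natDegree = n := by rw [hP, natDegree_sub_C, hdeg]
    have hPz : ∀ w : ℂ, P.eval w = 0 → 1 ≤ ‖w‖ := by
      intro w hw
      by_contra hlt
      push_neg at hlt
      have hpw : p.eval w = β * m := by
        have h' : p.eval w - β * m = 0 := by simpa [hP] using hw
        exact sub_eq_zero.mp h'
      have h1 : ‖p.eval w‖ = ‖β‖ * m := by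
        rw [hpw, norm_mul, Complex.norm_real, Real.norm_eq_abs, _root_.abs_of_nonneg hm0]
      have h2 : m ≤ ‖p.eval w‖ := minmod p hmpos hm' hz hlt.le
      nlinarith
    have hder : derivative P = derivative p := by rw [hP]; simp
    have := key_lemma P n hn hPdeg hPz z hz1
    rw [hder] at this
    have heval : (n : ℂ) * P.eval z - z * (derivative p).eval z = A - (n:ℂ) * β * m := by
      rw [hP]; simp [hA]; ring
    rwa [heval] at this
  -- step 2 : n*m ≤ |A|
  have step2 : (n:ℝ) * m ≤ ‖A‖ := by
    by_contra hlt
    push_neg at hlt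
    have hβ : ‖A / ((n:ℂ) * m)‖ < 1 := by
      rw [norm_div, habsnm, div_lt_one hnm]
      exact hlt
    have hkey := step1 _ hβ
    have hn0 : ((n:ℂ)) ≠ 0 := by exact_mod_cast Nat.cast_ne_zero.mpr (by omega)
    have hm0' : ((m:ℂ)) ≠ 0 := by
      simp only [ne_eq, Complex.ofReal_eq_zero]; linarith
    have hz0 : A - (n:ℂ) * (A / ((n:ℂ)*m)) * m = 0 := by
      field_simp
      ring
    rw [hz0] at hkey
    simp only [norm_zero] at hkey
    have hpz' : (derivative p).eval z = 0 := by
      have := le_antisymm hkey (norm_nonneg _)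
      simpa using this
    have hAe : A = (n:ℂ) * p.eval z := by rw [hA, hpz']; ring
    have hAa : ‖A‖ = n * ‖p.eval z‖ := by
      rw [hAe, norm_mul, Complex.norm_natCast]
    have := hm' z hzs
    have hn1 : (1:ℝ) ≤ n := by exact_mod_cast hn
    nlinarith
  -- step 3
  have step3 : ∀ ε : ℝ, 0 < ε →
      ‖(derivative p).eval z‖ + n * m ≤ ‖A‖ + ε := by
    intro ε hε
    obtain ⟨u, hu1, huA⟩ := unit_dir A
    set t : ℝ := max 0 (1 - ε / (n*m)) with ht
    have ht0 : 0 ≤ t := le_max_left _ _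
    have ht1 : t < 1 := by
      rw [ht, max_lt_iff]
      refine ⟨by norm_num, ?_⟩
      have : 0 < ε / (n*m) := by positivity
      linarith
    have htnm : t * (n*m) ≤ n*m := by nlinarith
    have hgap : n*m - t*(n*m) ≤ ε := by
      rcases le_or_gt (1 - ε/(n*m)) 0 with h | h
      · have hteq : t = 0 := by rw [ht, max_eq_left h]
        rw [hteq]
        have : (n:ℝ)*m ≤ ε := (one_le_div hnm).mp (by linarith)
        linarith
      · have hteq : t = 1 - ε/(n*m) := by rw [ht, max_eq_right h.le]
        rw [hteq]
        field_simp
        linarith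
    have hβ : ‖(t:ℂ) * u‖ < 1 := by
      rw [norm_mul, Complex.norm_real, Real.norm_eq_abs, _root_.abs_of_nonneg ht0, hu1, mul_one]
      exact ht1
    have hkey := step1 _ hβ
    have heq : A - (n:ℂ) * ((t:ℂ)*u) * m = ((‖A‖ - t*(n*m) : ℝ) : ℂ) * u := by
      nth_rewrite 1 [huA]
      push_cast
      ring
    rw [heq, norm_mul, hu1, mul_one, Complex.norm_real, Real.norm_eq_abs,
        _root_.abs_of_nonneg (by linarith : (0:ℝ) ≤ ‖A‖ - t*(n*m))] at hkey
    linarith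
  exact le_of_forall_pos_le_add step3

-- Claim B
open Complex in
lemma claimB (p : ℂ[X]) (n : ℕ) (hn : 1 ≤ n) (hdeg : p.natDegree = n)
    (hz : ∀ z : ℂ, p.eval z = 0 → 1 ≤ ‖z‖) {M : ℝ} (hM0 : 0 < M)
    (hM' : ∀ w ∈ sphere (0:ℂ) 1, ‖p.eval w‖ ≤ M)
    (z : ℂ) (hzs : z ∈ sphere (0:ℂ) 1) :
    ‖(derivative p).eval z‖ +
      ‖(n : ℂ) * p.eval z - z * (derivative p).eval z‖ ≤ n * M := by
  have hz1 : ‖z‖ = 1 := by simpa [mem_sphere_iff_norm] using hzs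
  set A : ℂ := (n : ℂ) * p.eval z - z * (derivative p).eval z with hA
  have hnM : (0:ℝ) < n * M := by
    have hn1 : (1:ℝ) ≤ n := by exact_mod_cast hn
    nlinarith
  have habsnM : ‖(n:ℂ) * (M:ℂ)‖ = n * M := by
    rw [norm_mul, Complex.norm_natCast, Complex.norm_real, Real.norm_eq_abs, _root_.abs_of_nonneg hM0.le]
  -- step 1
  have step1 : ∀ lam : ℂ, 1 < ‖lam‖ →
      ‖(derivative p).eval z‖ ≤ ‖A - (n : ℂ) * lam * M‖ := by
    intro lam hlam
    set P : ℂ[X] := p - C (lam * M) with hP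
    have hPdeg : P.natDegree = n := by rw [hP, natDegree_sub_C, hdeg]
    have hPz : ∀ w : ℂ, P.eval w = 0 → 1 ≤ ‖w‖ := by
      intro w hw
      by_contra hlt
      push_neg at hlt
      have hpw : p.eval w = lam * M := by
        have h' : p.eval w - lam * M = 0 := by simpa [hP] using hw
        exact sub_eq_zero.mp h'
      have h1 : ‖p.eval w‖ = ‖lam‖ * M := by
        rw [hpw, norm_mul, Complex.norm_real, Real.norm_eq_abs, _root_.abs_of_nonneg hM0.le]
      have h2 : ‖p.eval w‖ ≤ M := maxmod p hM' hlt.le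
      nlinarith
    have hder : derivative P = derivative p := by rw [hP]; simp
    have := key_lemma P n hn hPdeg hPz z hz1
    rw [hder] at this
    have heval : (n : ℂ) * P.eval z - z * (derivative p).eval z = A - (n:ℂ) * lam * M := by
      rw [hP]; simp [hA]; ring
    rwa [heval] at this
  -- step 2 : |A| ≤ n*M
  have step2 : ‖A‖ ≤ (n:ℝ) * M := by
    by_contra hlt
    push_neg at hlt
    have hlam : 1 < ‖A / ((n:ℂ) * M)‖ := by
      rw [norm_div, habsnM, lt_div_iff₀ hnM, one_mul]
      exact hlt
    have hkey := step1 _ hlam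
    have hn0 : ((n:ℂ)) ≠ 0 := by exact_mod_cast Nat.cast_ne_zero.mpr (by omega)
    have hM0' : ((M:ℂ)) ≠ 0 := by
      simp only [ne_eq, Complex.ofReal_eq_zero]; linarith
    have hz0 : A - (n:ℂ) * (A / ((n:ℂ)*M)) * M = 0 := by
      field_simp
      ring
    rw [hz0] at hkey
    simp only [norm_zero] at hkey
    have hpz' : (derivative p).eval z = 0 := by
      have := le_antisymm hkey (norm_nonneg _)
      simpa using this
    have hAe : A = (n:ℂ) * p.eval z := by rw [hA, hpz']; ring
    have hAa : ‖A‖ = n * ‖p.eval z‖ := by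
      rw [hAe, norm_mul, Complex.norm_natCast]
    have := hM' z hzs
    have hn1 : (1:ℝ) ≤ n := by exact_mod_cast hn
    nlinarith
  -- step 3
  have step3 : ∀ ε : ℝ, 0 < ε →
      ‖(derivative p).eval z‖ + ‖A‖ ≤ n * M + ε := by
    intro ε hε
    obtain ⟨u, hu1, huA⟩ := unit_dir A
    set t : ℝ := 1 + ε / (n*M) with ht
    have ht1 : 1 < t := by
      rw [ht]
      have : 0 < ε / (n*M) := by positivity
      linarith
    have hlam : 1 < ‖(t:ℂ) * u‖ := by
      rw [norm_mul, Complex.norm_real, Real.norm_eq_abs, _root_.abs_of_nonneg (by linarith), hu1, mul_one]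
      exact ht1
    have hkey := step1 _ hlam
    have htnM : t * (n*M) = n*M + ε := by
      rw [ht]; field_simp
    have heq : A - (n:ℂ) * ((t:ℂ)*u) * M = ((‖A‖ - t*(n*M) : ℝ) : ℂ) * u := by
      nth_rewrite 1 [huA]
      push_cast
      ring
    have habs2 : ‖((‖A‖ - t*(n*M) : ℝ) : ℂ) * u‖
        = t*(n*M) - ‖A‖ := by
      rw [norm_mul, hu1, mul_one, Complex.norm_real, Real.norm_eq_abs, abs_sub_comm,
          _root_.abs_of_nonneg (by nlinarith : (0:ℝ) ≤ t*(n*M) - ‖A‖)]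
    rw [heq, habs2, htnM] at hkey
    linarith
  exact le_of_forall_pos_le_add step3

noncomputable def maxOn' (p : Polynomial ℂ) (r : ℝ) : ℝ :=
  sSup ((fun z => ‖p.eval z‖) '' sphere (0 : ℂ) r)

noncomputable def minOn' (p : Polynomial ℂ) (r : ℝ) : ℝ :=
  sInf ((fun z => ‖p.eval z‖) '' sphere (0 : ℂ) r)

theorem aziz_dawood_upper (p : Polynomial ℂ) (n : ℕ) (hn : 1 ≤ n) (hdeg : p.natDegree = n)
    (hz : ∀ z : ℂ, p.eval z = 0 → 1 ≤ ‖z‖) :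
    maxOn' (derivative p) 1 ≤ (n / 2 : ℝ) * (maxOn' p 1 - minOn' p 1) := by
  have hp0 : p ≠ 0 := by
    intro h; rw [h] at hdeg; simp at hdeg; omega
  set S : Set ℂ := sphere (0:ℂ) 1 with hS
  have hSne : S.Nonempty := NormedSpace.sphere_nonempty.mpr zero_le_one
  have hSc : IsCompact S := isCompact_sphere 0 1
  set f : ℂ → ℝ := fun z => ‖p.eval z‖ with hf
  have hfc : ContinuousOn f S := (continuous_norm.comp p.continuous_aeval).continuousOn
  have himc : IsCompact (f '' S) := hSc.image_of_continuousOn hfc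
  have himne : (f '' S).Nonempty := hSne.image f
  set M : ℝ := maxOn' p 1 with hM
  set m : ℝ := minOn' p 1 with hm
  have hMle : ∀ w ∈ S, ‖p.eval w‖ ≤ M := by
    intro w hw
    exact le_csSup himc.bddAbove ⟨w, hw, rfl⟩
  have hmle : ∀ w ∈ S, m ≤ ‖p.eval w‖ := by
    intro w hw
    exact csInf_le himc.bddBelow ⟨w, hw, rfl⟩
  have hm0 : 0 ≤ m := by
    apply le_csInf himne
    rintro b ⟨w, hw, rfl⟩
    exact norm_nonneg _
  have hSinf : S.Infinite := by
    apply IsPreconnected.infinite_of_nontrivial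
    · exact (isConnected_sphere (by rw [Complex.rank_real_complex]; norm_num) 0 zero_le_one).isPreconnected
    · refine ⟨1, ?_, -1, ?_, ?_⟩
      · simp [hS, mem_sphere_iff_norm]
      · simp [hS, mem_sphere_iff_norm]
      · norm_num
  have hM0 : 0 < M := by
    by_contra hle
    push_neg at hle
    have : S ⊆ {x | p.IsRoot x} := by
      intro w hw
      have h1 := hMle w hw
      have : ‖p.eval w‖ = 0 := le_antisymm (h1.trans hle) (norm_nonneg _)
      simpa [Polynomial.IsRoot] using norm_eq_zero.mp this
    exact hSinf (Set.Finite.subset (p.finite_setOf_isRoot hp0) this)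
  -- pointwise bound
  have hpt : ∀ z ∈ S, ‖(derivative p).eval z‖ ≤ (n / 2 : ℝ) * (M - m) := by
    intro z hzs
    have hA := claimA p n hn hdeg hz hm0 hmle z hzs
    have hB := claimB p n hn hdeg hz hM0 hMle z hzs
    linarith
  apply csSup_le (hSne.image _)
  rintro b ⟨w, hw, rfl⟩
  exact hpt w hw
end

section
/- If p is a complex polynomial of degree n with all its zeros in the closed unit disk {z : |z| ≤ 1}, then max_{|z|=1} |p'(z)| ≥ (n/2) · max_{|z|=1} |p(z)|. -/
open Polynomial Metric

lemma re_half (z r : ℂ) (hz : ‖z‖ = 1) (hr : ‖r‖ ≤ 1) (hne : z ≠ r) :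
    (1:ℝ)/2 ≤ (z / (z - r)).re := by
  have hzsq : Complex.normSq z = 1 := by
    rw [Complex.normSq_eq_norm_sq, hz]; norm_num
  have hrsq : Complex.normSq r ≤ 1 := by
    rw [Complex.normSq_eq_norm_sq]; nlinarith [norm_nonneg r]
  have hd : 0 < Complex.normSq (z - r) := by
    rw [Complex.normSq_pos]; exact sub_ne_zero.mpr hne
  rw [Complex.div_re]
  rw [← add_div, le_div_iff₀ hd]
  simp only [Complex.normSq_apply, Complex.sub_re, Complex.sub_im] at *
  nlinarith [hzsq, hrsq]

lemma turan_key (n : ℕ) : ∀ (p : Polynomial ℂ), p ≠ 0 → p.natDegree = n →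
    (∀ z, p.eval z = 0 → ‖z‖ ≤ 1) →
    ∀ z : ℂ, ‖z‖ = 1 → p.eval z ≠ 0 →
    (n : ℝ)/2 ≤ (z * (Polynomial.derivative p).eval z / p.eval z).re := by
  induction n with
  | zero =>
    intro p hp h0 _ z _ hpz
    obtain ⟨c, rfl⟩ := Polynomial.natDegree_eq_zero.mp h0
    simp
  | succ n ih =>
    intro p hp hdeg hz z hz1 hpz
    have hdpos : 0 < p.degree := by
      rw [← Polynomial.natDegree_pos_iff_degree_pos]; omega
    obtain ⟨r, hr⟩ := Complex.exists_root hdpos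
    obtain ⟨q, hfac⟩ := (Polynomial.dvd_iff_isRoot.mpr hr)
    have hq0 : q ≠ 0 := by rintro rfl; simp at hfac; exact hp hfac
    have hXr : (Polynomial.X - Polynomial.C r) ≠ (0 : Polynomial ℂ) :=
      Polynomial.X_sub_C_ne_zero r
    have hqdeg : q.natDegree = n := by
      have := Polynomial.natDegree_mul hXr hq0
      rw [← hfac, hdeg, Polynomial.natDegree_X_sub_C] at this
      omega
    have hqz : ∀ w, q.eval w = 0 → ‖w‖ ≤ 1 := by
      intro w hw
      apply hz
      rw [hfac]; simp [hw]
    have hr1 : ‖r‖ ≤ 1 := hz r hr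
    have hevp : p.eval z = (z - r) * q.eval z := by rw [hfac]; simp
    have hzr : z - r ≠ 0 := by
      intro h; apply hpz; rw [hevp, h, zero_mul]
    have hqzz : q.eval z ≠ 0 := by
      intro h; apply hpz; rw [hevp, h, mul_zero]
    have hder : (Polynomial.derivative p).eval z
        = q.eval z + (z - r) * (Polynomial.derivative q).eval z := by
      rw [hfac, Polynomial.derivative_mul]
      simp
    have hsplit : z * (Polynomial.derivative p).eval z / p.eval z
        = z / (z - r) + z * (Polynomial.derivative q).eval z / q.eval z := by
      rw [hder, hevp]
      field_simp
    rw [hsplit, Complex.add_re]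
    have h1 := re_half z r hz1 hr1 (by intro h; apply hzr; rw [h, sub_self])
    have h2 := ih q hq0 hqdeg hqz z hz1 hqzz
    push_cast
    linarith

lemma turan_pointwise (p : Polynomial ℂ) (n : ℕ) (hn : 1 ≤ n) (hdeg : p.natDegree = n)
    (hz : ∀ z : ℂ, p.eval z = 0 → ‖z‖ ≤ 1) (z : ℂ) (hz1 : ‖z‖ = 1) :
    (n / 2 : ℝ) * ‖p.eval z‖ ≤ ‖(Polynomial.derivative p).eval z‖ := by
  by_cases hpz : p.eval z = 0
  · rw [hpz]; simp only [norm_zero, mul_zero]; positivity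
  · have hp : p ≠ 0 := by rintro rfl; simp [Polynomial.natDegree_zero] at hdeg; omega
    have key := turan_key n p hp hdeg hz z hz1 hpz
    have hre : (z * (Polynomial.derivative p).eval z / p.eval z).re
        ≤ ‖z * (Polynomial.derivative p).eval z / p.eval z‖ :=
      Complex.re_le_norm _
    rw [norm_div, norm_mul, hz1, one_mul] at hre
    have habs : 0 < ‖p.eval z‖ := by
      simpa [norm_pos_iff] using hpz
    have h3 : (n : ℝ)/2 ≤ ‖(Polynomial.derivative p).eval z‖ / ‖p.eval z‖ :=
      le_trans key hre
    rw [le_div_iff₀ habs] at h3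
    linarith

theorem turan (p : Polynomial ℂ) (n : ℕ) (hn : 1 ≤ n) (hdeg : p.natDegree = n)
    (hz : ∀ z : ℂ, p.eval z = 0 → ‖z‖ ≤ 1) :
    (n / 2 : ℝ) * polyMaxOn p 1 ≤ polyMaxOn (derivative p) 1 := by
  have hcs : IsCompact (sphere (0:ℂ) 1) := isCompact_sphere 0 1
  have hne : (sphere (0:ℂ) 1).Nonempty := NormedSpace.sphere_nonempty.mpr zero_le_one
  have hcont : ContinuousOn (fun z => ‖p.eval z‖) (sphere (0:ℂ) 1) :=
    (continuous_norm.comp p.continuous_aeval).continuousOn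
  have hcont' : ContinuousOn (fun z => ‖(derivative p).eval z‖) (sphere (0:ℂ) 1) :=
    (continuous_norm.comp (derivative p).continuous_aeval).continuousOn
  obtain ⟨z0, hz0, hmax⟩ := hcs.exists_sSup_image_eq hne hcont
  have hz01 : ‖z0‖ = 1 := by
    simpa [Complex.dist_eq] using hz0
  have hbdd : BddAbove ((fun z => ‖(derivative p).eval z‖) '' sphere (0:ℂ) 1) :=
    (hcs.image_of_continuousOn hcont').bddAbove
  have hle : ‖(derivative p).eval z0‖
      ≤ polyMaxOn (derivative p) 1 :=
    le_csSup hbdd ⟨z0, hz0, rfl⟩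
  have := turan_pointwise p n hn hdeg hz z0 hz01
  unfold polyMaxOn at hle ⊢
  rw [hmax]
  linarith
end

section
/- If p is a complex polynomial of degree n with all its zeros in the closed unit disk, then max_{|z|=1} |p'(z)| ≥ (n/2) · [max_{|z|=1} |p(z)| + min_{|z|=1} |p(z)|]. -/
open Polynomial Metric

noncomputable def polyMinOn (p : Polynomial ℂ) (r : ℝ) : ℝ :=
  sInf ((fun z => ‖p.eval z‖) '' sphere (0 : ℂ) r)

namespace AzizDawood

lemma half_le_re {z a : ℂ} (hz : ‖z‖ = 1) (ha : ‖a‖ ≤ 1)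
    (hne : z - a ≠ 0) : (1:ℝ)/2 ≤ (z * (z - a)⁻¹).re := by
  have hns : 0 < Complex.normSq (z - a) := Complex.normSq_pos.mpr hne
  have h1 : Complex.normSq z = 1 := by rw [← Complex.sq_norm, hz]; norm_num
  have h2 : Complex.normSq a ≤ 1 := by
    rw [← Complex.sq_norm]; nlinarith [norm_nonneg a]
  rw [← div_eq_mul_inv, Complex.div_re, ← add_div, le_div_iff₀ hns]
  simp only [Complex.normSq_apply, Complex.sub_re, Complex.sub_im] at *
  nlinarith [h1, h2, hns]

lemma logderiv_sum (S : Multiset ℂ) (z : ℂ) (h : ∀ a ∈ S, z - a ≠ 0) :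
    eval z (derivative (S.map (fun a => X - C a)).prod)
      = eval z (S.map (fun a => X - C a)).prod * (S.map (fun a => (z - a)⁻¹)).sum := by
  induction S using Multiset.induction_on with
  | empty => simp
  | cons a S ih =>
    have hza : z - a ≠ 0 := h a (Multiset.mem_cons_self a S)
    have ih' := ih (fun b hb => h b (Multiset.mem_cons_of_mem hb))
    simp only [Multiset.map_cons, Multiset.prod_cons, Multiset.sum_cons,
      derivative_mul, eval_add, eval_mul, eval_sub, eval_X, eval_C, derivative_sub,
      derivative_X, derivative_C, sub_zero, eval_one, ih', one_mul]
    field_simp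

lemma re_logderiv_ge {h : ℂ[X]} {n : ℕ} (hn : 1 ≤ n) (hdeg : h.natDegree = n)
    (hz1 : ∀ w : ℂ, eval w h = 0 → ‖w‖ ≤ 1)
    {z : ℂ} (hz : ‖z‖ = 1) (hnz : eval z h ≠ 0) :
    (n : ℝ)/2 ≤ (z * eval z (derivative h) / eval z h).re := by
  have hp0 : h ≠ 0 := fun hh => hnz (by simp [hh])
  have hcard : Multiset.card h.roots = n := by
    rw [← hdeg]; exact (splits_iff_card_roots.mp (IsAlgClosed.splits h))
  have hfac := C_leadingCoeff_mul_prod_multiset_X_sub_C (p := h) (by rw [hcard, hdeg])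
  have hroot : ∀ a ∈ h.roots, z - a ≠ 0 := by
    intro a ha hza
    rw [sub_eq_zero] at hza
    exact hnz (hza ▸ (isRoot_of_mem_roots ha))
  set S := h.roots with hS
  have hevalh : eval z h = h.leadingCoeff * eval z (S.map (fun a => X - C a)).prod := by
    conv_lhs => rw [← hfac]
    rw [eval_mul, eval_C]
  have hd : eval z (derivative h)
      = eval z h * (S.map (fun a => (z-a)⁻¹)).sum := by
    conv_lhs => rw [← hfac]
    rw [derivative_C_mul, eval_mul, eval_C, logderiv_sum S z hroot, hevalh]
    ring
  rw [hd]
  have hrw : z * (eval z h * (S.map (fun a => (z - a)⁻¹)).sum) / eval z h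
      = (S.map (fun a => z * (z - a)⁻¹)).sum := by
    rw [Multiset.sum_map_mul_left]
    field_simp
  rw [hrw]
  have hre : ((S.map (fun a => z * (z - a)⁻¹)).sum).re
      = ((S.map (fun a => (z * (z - a)⁻¹).re)).sum) := by
    rw [← Complex.coe_reAddGroupHom, map_multiset_sum, Multiset.map_map]
    rfl
  rw [hre]
  have hb : ∀ x ∈ S.map (fun a => (z * (z - a)⁻¹).re), (1:ℝ)/2 ≤ x := by
    intro x hx
    obtain ⟨a, ha, rfl⟩ := Multiset.mem_map.mp hx
    exact half_le_re hz (hz1 a (isRoot_of_mem_roots ha)) (hroot a ha)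
  have hsum := Multiset.card_nsmul_le_sum hb
  rw [Multiset.card_map, hcard] at hsum
  calc (n:ℝ)/2 = n • ((1:ℝ)/2) := by simp [nsmul_eq_mul]; ring
    _ ≤ _ := hsum

lemma key_ineq {h : ℂ[X]} {n : ℕ} (hn : 1 ≤ n) (hdeg : h.natDegree = n)
    (hz1 : ∀ w : ℂ, eval w h = 0 → ‖w‖ ≤ 1)
    {z : ℂ} (hz : ‖z‖ = 1) :
    ‖(n:ℂ) * eval z h - z * eval z (derivative h)‖
      ≤ ‖eval z (derivative h)‖ := by
  by_cases hnz : eval z h = 0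
  · simp [hnz, hz]
  · set w := z * eval z (derivative h) / eval z h with hw
    have hre := re_logderiv_ge hn hdeg hz1 hz hnz
    have key : ((n:ℂ) - w) * eval z h = (n:ℂ) * eval z h - z * eval z (derivative h) := by
      rw [hw]; field_simp
    have h2 : w * eval z h = z * eval z (derivative h) := by
      rw [hw]; field_simp
    have habs : ‖(n:ℂ) - w‖ ≤ ‖w‖ := by
      rw [Complex.norm_def, Complex.norm_def]
      apply Real.sqrt_le_sqrt
      simp only [Complex.normSq_apply, Complex.sub_re, Complex.sub_im,
        Complex.natCast_re, Complex.natCast_im, zero_sub]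
      have hn' : (0:ℝ) ≤ (n:ℝ) := Nat.cast_nonneg n
      nlinarith [hre]
    calc ‖(n:ℂ) * eval z h - z * eval z (derivative h)‖
        = ‖(n:ℂ) - w‖ * ‖eval z h‖ := by
          rw [← key, norm_mul]
      _ ≤ ‖w‖ * ‖eval z h‖ :=
          mul_le_mul_of_nonneg_right habs (norm_nonneg _)
      _ = ‖z * eval z (derivative h)‖ := by rw [← norm_mul, h2]
      _ = ‖eval z (derivative h)‖ := by rw [norm_mul, hz, one_mul]

lemma growth {p : ℂ[X]} {n : ℕ} (hn : 1 ≤ n) (hdeg : p.natDegree = n)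
    {m : ℝ} (hm0 : 0 < m) (hm : ∀ w : ℂ, ‖w‖ = 1 → m ≤ ‖eval w p‖)
    (hz1 : ∀ w : ℂ, eval w p = 0 → ‖w‖ ≤ 1) :
    (∀ z : ℂ, 1 ≤ ‖z‖ → m * ‖z‖ ^ n ≤ ‖eval z p‖)
      ∧ m ≤ ‖p.leadingCoeff‖ := by
  have hp0 : p ≠ 0 := fun hh => by
    have := hm 1 (by simp)
    rw [hh] at this; simp at this; linarith
  have hcard : Multiset.card p.roots = n := by
    rw [← hdeg]; exact (splits_iff_card_roots.mp (IsAlgClosed.splits p))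
  set S := p.roots with hS
  have hfac := C_leadingCoeff_mul_prod_multiset_X_sub_C (p := p) (by rw [← hS, hcard, hdeg])
  have hropen : ∀ a ∈ S, ‖a‖ < 1 := by
    intro a ha
    rcases lt_or_eq_of_le (hz1 a (isRoot_of_mem_roots ha)) with h | h
    · exact h
    · exfalso
      have := hm a h
      rw [(isRoot_of_mem_roots ha : eval a p = 0)] at this
      simp at this; linarith
  set G : ℂ[X] := C p.leadingCoeff * (S.map (fun a => 1 - C a * X)).prod with hG
  have hGeval : ∀ w : ℂ, eval w G
      = p.leadingCoeff * (S.map (fun a => 1 - a * w)).prod := by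
    intro w
    rw [hG, eval_mul, eval_C, eval_multiset_prod, Multiset.map_map]
    congr 2
    apply Multiset.map_congr rfl
    intro a _
    simp
  have hGne : ∀ w : ℂ, ‖w‖ ≤ 1 → eval w G ≠ 0 := by
    intro w hw
    rw [hGeval]
    apply mul_ne_zero (leadingCoeff_ne_zero.mpr hp0)
    apply Multiset.prod_ne_zero
    rw [Multiset.mem_map]
    rintro ⟨a, ha, ha0⟩
    have : a * w = 1 := by linear_combination -ha0
    have h1 : ‖a * w‖ = 1 := by rw [this]; simp
    rw [norm_mul] at h1
    nlinarith [hropen a ha, norm_nonneg a, norm_nonneg w]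
  have hrel : ∀ w : ℂ, w ≠ 0 → eval w G = w ^ n * eval w⁻¹ p := by
    intro w hw
    have hp' : eval w⁻¹ p
        = p.leadingCoeff * (S.map (fun a => w⁻¹ - a)).prod := by
      conv_lhs => rw [← hfac]
      rw [eval_mul, eval_C, eval_multiset_prod, Multiset.map_map]
      congr 2
      apply Multiset.map_congr rfl
      intro a _
      simp
    rw [hGeval, hp']
    have h2 : (S.map (fun a => 1 - a * w)).prod
        = w ^ n * (S.map (fun a => w⁻¹ - a)).prod := by
      have h1 : (S.map (fun a => (1:ℂ) - a * w)).prod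
          = (S.map (fun a => w * (w⁻¹ - a))).prod := by
        congr 1
        apply Multiset.map_congr rfl
        intro a _
        field_simp
      rw [h1, Multiset.prod_map_mul, Multiset.map_const', Multiset.prod_replicate, hcard]
    rw [h2]; ring
  have hmain : ∀ w : ℂ, ‖w‖ ≤ 1 → m ≤ ‖eval w G‖ := by
    intro w hw
    have hinv : ‖(eval w G)⁻¹‖ ≤ m⁻¹ := by
      have hcl : w ∈ closure (ball (0:ℂ) 1) := by
        rw [closure_ball (0:ℂ) one_ne_zero]
        simpa using hw
      refine Complex.norm_le_of_forall_mem_frontier_norm_le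
        (f := fun x : ℂ => (eval x G)⁻¹) isBounded_ball ?_ ?_ hcl
      · apply DifferentiableOn.diffContOnCl
        apply DifferentiableOn.inv (G.differentiable.differentiableOn)
        intro x hx
        apply hGne
        rw [closure_ball (0:ℂ) one_ne_zero] at hx
        simpa using hx
      · intro x hx
        rw [frontier_ball (0:ℂ) one_ne_zero] at hx
        have hx1 : ‖x‖ = 1 := by simpa using hx
        have hx0 : x ≠ 0 := by
          intro h; rw [h] at hx1; simp at hx1
        have habs1 : ‖eval x G‖ = ‖eval x⁻¹ p‖ := by
          rw [hrel x hx0, norm_mul, norm_pow, hx1, one_pow, one_mul]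
        simp only [norm_inv]
        rw [habs1]
        have hxi : ‖x⁻¹‖ = 1 := by rw [norm_inv, hx1]; norm_num
        exact inv_anti₀ hm0 (hm x⁻¹ hxi)
    have hne := hGne w hw
    rw [norm_inv] at hinv
    have habs : 0 < ‖eval w G‖ := by
      simpa [norm_pos_iff] using hne
    rw [inv_le_inv₀ habs hm0] at hinv
    exact hinv
  constructor
  · intro z hz
    have hz0 : z ≠ 0 := by
      intro h; rw [h] at hz; simp at hz; linarith
    have hwi : ‖z⁻¹‖ ≤ 1 := by
      rw [norm_inv]
      exact inv_le_one_of_one_le₀ hz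
    have hm2 := hmain z⁻¹ hwi
    rw [hrel z⁻¹ (inv_ne_zero hz0), inv_inv, norm_mul, norm_pow, norm_inv] at hm2
    have hzpos : 0 < ‖z‖ := by positivity
    have heq : (‖z‖)⁻¹ ^ n * ‖eval z p‖ * ‖z‖ ^ n
        = ‖eval z p‖ := by
      rw [inv_pow, inv_mul_eq_div, div_mul_cancel₀ _ (pow_ne_zero _ hzpos.ne')]
    calc m * ‖z‖ ^ n
        ≤ (‖z‖)⁻¹ ^ n * ‖eval z p‖ * ‖z‖ ^ n :=
          mul_le_mul_of_nonneg_right hm2 (pow_nonneg hzpos.le n)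
      _ = ‖eval z p‖ := heq
  · have hm0' := hmain 0 (by simp)
    have h0 : eval (0:ℂ) G = p.leadingCoeff := by
      rw [hGeval]
      have : (S.map (fun a => (1:ℂ) - a * 0)).prod = 1 := by
        rw [show (fun a : ℂ => (1:ℂ) - a * 0) = (fun _ => (1:ℂ)) by funext a; ring]
        simp [Multiset.map_const', Multiset.prod_replicate]
      rw [this, mul_one]
    rwa [h0] at hm0'

lemma perturb {p : ℂ[X]} {n : ℕ} (hdeg : p.natDegree = n)
    {m : ℝ}
    (hgrow : ∀ z : ℂ, 1 ≤ ‖z‖ → m * ‖z‖ ^ n ≤ ‖eval z p‖)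
    (hlc : m ≤ ‖p.leadingCoeff‖)
    {b : ℂ} (hb : ‖b‖ < m) :
    (p + C b * X ^ n).natDegree = n ∧
    (∀ w : ℂ, eval w (p + C b * X ^ n) = 0 → ‖w‖ < 1) := by
  have hcoeff : (p + C b * X ^ n).coeff n = p.leadingCoeff + b := by
    rw [coeff_add, coeff_C_mul, coeff_X_pow, if_pos rfl, mul_one, ← hdeg, coeff_natDegree]
  have hcne : (p + C b * X ^ n).coeff n ≠ 0 := by
    rw [hcoeff]
    intro h
    have : ‖b‖ = ‖p.leadingCoeff‖ := by
      rw [show b = -p.leadingCoeff by linear_combination h]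
      simp
    linarith
  constructor
  · apply le_antisymm
    · apply le_trans (natDegree_add_le _ _)
      simp only [max_le_iff]
      exact ⟨le_of_eq hdeg, le_trans (natDegree_C_mul_le _ _) (by simp)⟩
    · exact le_natDegree_of_ne_zero hcne
  · intro w hw
    by_contra hcon
    push_neg at hcon
    have hwpow : (0:ℝ) < ‖w‖ ^ n := by
      have : (0:ℝ) < ‖w‖ := lt_of_lt_of_le one_pos hcon
      positivity
    have heval : eval w p = -(b * w ^ n) := by
      have h0 : eval w p + b * w ^ n = 0 := by simpa using hw
      linear_combination h0
    have h1 := hgrow w hcon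
    rw [heval] at h1
    simp only [norm_neg, norm_mul, norm_pow] at h1
    nlinarith

lemma deriv_lb {p : ℂ[X]} {n : ℕ} (hn : 1 ≤ n) (hdeg : p.natDegree = n)
    {m : ℝ} (hm0 : 0 < m)
    (hgrow : ∀ z : ℂ, 1 ≤ ‖z‖ → m * ‖z‖ ^ n ≤ ‖eval z p‖)
    (hlc : m ≤ ‖p.leadingCoeff‖)
    {z : ℂ} (hz : ‖z‖ = 1) :
    (n:ℝ) * m ≤ ‖eval z (derivative p)‖ := by
  by_contra hcon
  push_neg at hcon
  have hz0 : z ≠ 0 := by intro h; rw [h] at hz; simp at hz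
  have hzp : z ^ (n-1) ≠ 0 := pow_ne_zero _ hz0
  have hnpos : (0:ℝ) < n := by exact_mod_cast hn
  have hnne : ((n:ℂ)) ≠ 0 := Nat.cast_ne_zero.mpr (by omega)
  set b : ℂ := -(eval z (derivative p)) / ((n:ℂ) * z ^ (n-1)) with hb
  have habsb : ‖b‖ < m := by
    rw [hb, norm_div, norm_neg, norm_mul, norm_pow, hz, one_pow, mul_one,
      Complex.norm_natCast]
    rw [div_lt_iff₀ hnpos]
    nlinarith
  obtain ⟨hdeg2, hzero2⟩ := perturb hdeg hgrow hlc habsb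
  have hdh : eval z (derivative (p + C b * X ^ n)) = 0 := by
    rw [derivative_add, derivative_C_mul, derivative_X_pow]
    simp only [eval_add, eval_mul, eval_C, eval_pow, eval_X, eval_natCast]
    rw [hb]
    field_simp
    ring
  have hnz : eval z (p + C b * X ^ n) ≠ 0 := by
    intro h0
    have := hzero2 z h0
    rw [hz] at this
    exact lt_irrefl _ this
  have hre := re_logderiv_ge hn hdeg2 (fun w hw => (hzero2 w hw).le) hz hnz
  rw [hdh] at hre
  simp only [mul_zero, zero_div, Complex.zero_re] at hre
  linarith

lemma star_ineq {p : ℂ[X]} {n : ℕ} (hn : 1 ≤ n) (hdeg : p.natDegree = n)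
    {m : ℝ} (hm0 : 0 < m)
    (hgrow : ∀ z : ℂ, 1 ≤ ‖z‖ → m * ‖z‖ ^ n ≤ ‖eval z p‖)
    (hlc : m ≤ ‖p.leadingCoeff‖)
    {z : ℂ} (hz : ‖z‖ = 1) :
    ‖(n:ℂ) * eval z p - z * eval z (derivative p)‖ + (n:ℝ) * m
      ≤ ‖eval z (derivative p)‖ := by
  set u := eval z (derivative p) with hu
  have hnpos : (0:ℝ) < n := by exact_mod_cast hn
  have hun : (n:ℝ) * m ≤ ‖u‖ := deriv_lb hn hdeg hm0 hgrow hlc hz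
  have habsu : 0 < ‖u‖ := by nlinarith
  have hu0 : u ≠ 0 := by
    intro h; rw [h] at habsu; simp at habsu
  have hz0 : z ≠ 0 := by intro h; rw [h] at hz; simp at hz
  have hzp : z ^ (n-1) ≠ 0 := pow_ne_zero _ hz0
  have hzn : z * z ^ (n-1) = z ^ n := by
    rw [← pow_succ']; congr 1; omega
  have key : ∀ t : ℝ, 0 < t → t < 1 →
      ‖(n:ℂ) * eval z p - z * u‖ ≤ ‖u‖ - t * ((n:ℝ) * m) := by
    intro t ht0 ht1
    set b : ℂ := -((t*m : ℝ) : ℂ) * u / (((‖u‖ : ℝ) : ℂ) * z ^ (n-1)) with hb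
    have habsune : ((‖u‖ : ℝ) : ℂ) ≠ 0 := by
      simpa using habsu.ne'
    have habsb : ‖b‖ < m := by
      rw [hb, norm_div, norm_mul, norm_mul, norm_neg, norm_pow, hz, one_pow, mul_one,
        Complex.norm_real, Real.norm_eq_abs, Complex.norm_real, Real.norm_eq_abs, abs_of_pos (mul_pos ht0 hm0),
        abs_of_pos habsu]
      rw [div_lt_iff₀ habsu]
      exact mul_lt_mul_of_pos_right (mul_lt_of_lt_one_left hm0 ht1) habsu
    obtain ⟨hdeg2, hzero2⟩ := perturb hdeg hgrow hlc habsb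
    have hki := key_ineq hn hdeg2 (fun w hw => (hzero2 w hw).le) hz
    have hevalh : eval z (p + C b * X ^ n) = eval z p + b * z ^ n := by simp
    have hderivh : eval z (derivative (p + C b * X ^ n)) = u + b * n * z ^ (n-1) := by
      rw [derivative_add, derivative_C_mul, derivative_X_pow]
      simp only [eval_add, eval_mul, eval_C, eval_pow, eval_X, eval_natCast, hu]
      ring
    have hid : (n:ℂ) * eval z (p + C b * X ^ n)
          - z * eval z (derivative (p + C b * X ^ n))
        = (n:ℂ) * eval z p - z * u := by
      rw [hevalh, hderivh]
      linear_combination (-(n:ℂ) * b) * hzn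
    have hderivval : u + b * n * z ^ (n-1)
        = (((1 - t*m*n/‖u‖ : ℝ)):ℂ) * u := by
      rw [hb]
      push_cast
      field_simp
      ring
    have hfactor : (0:ℝ) ≤ 1 - t*m*n/‖u‖ := by
      rw [sub_nonneg, div_le_one habsu]
      nlinarith
    have habs2 : ‖eval z (derivative (p + C b * X ^ n))‖
        = ‖u‖ - t * ((n:ℝ) * m) := by
      rw [hderivh, hderivval, norm_mul, Complex.norm_real, Real.norm_eq_abs, abs_of_nonneg hfactor]
      field_simp
    rw [hid, habs2] at hki
    exact hki
  have hfin : ‖(n:ℂ) * eval z p - z * u‖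
      ≤ ‖u‖ - (n:ℝ) * m := by
    apply le_of_forall_pos_le_add
    intro ε hε
    have hnm : (0:ℝ) < (n:ℝ) * m := by positivity
    set t : ℝ := max (1 - ε/((n:ℝ)*m)) (1/2) with ht
    have ht1 : t < 1 := by
      apply max_lt
      · have : 0 < ε/((n:ℝ)*m) := by positivity
        linarith
      · norm_num
    have ht0 : (0:ℝ) < t := lt_of_lt_of_le one_half_pos (le_max_right _ _)
    have hk := key t ht0 ht1
    have htl : 1 - ε/((n:ℝ)*m) ≤ t := le_max_left _ _
    have : ‖u‖ - t * ((n:ℝ)*m) ≤ ‖u‖ - (n:ℝ)*m + ε := by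
      have h2 : (1 - ε/((n:ℝ)*m)) * ((n:ℝ)*m) ≤ t * ((n:ℝ)*m) :=
        mul_le_mul_of_nonneg_right htl hnm.le
      have h3 : (1 - ε/((n:ℝ)*m)) * ((n:ℝ)*m) = (n:ℝ)*m - ε := by
        field_simp
      linarith
    linarith
  linarith

end AzizDawood

open AzizDawood in
theorem aziz_dawood_lower (p : Polynomial ℂ) (n : ℕ) (hn : 1 ≤ n) (hdeg : p.natDegree = n)
    (hz : ∀ z : ℂ, p.eval z = 0 → ‖z‖ ≤ 1) :
    (n / 2 : ℝ) * (polyMaxOn p 1 + polyMinOn p 1) ≤ polyMaxOn (derivative p) 1 := by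
  have hcont : Continuous fun z : ℂ => ‖eval z p‖ :=
    continuous_norm.comp p.continuous
  have hcont' : Continuous fun z : ℂ => ‖eval z (derivative p)‖ :=
    continuous_norm.comp (derivative p).continuous
  have hsne : (sphere (0:ℂ) 1).Nonempty := NormedSpace.sphere_nonempty.mpr zero_le_one
  have hmemiff : ∀ w : ℂ, w ∈ sphere (0:ℂ) 1 ↔ ‖w‖ = 1 := by
    intro w
    rw [mem_sphere_zero_iff_norm]
  set m := polyMinOn p 1 with hmdef
  have hbdd : BddBelow ((fun z => ‖eval z p‖) '' sphere (0:ℂ) 1) := by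
    refine ⟨0, ?_⟩
    rintro x ⟨v, _, rfl⟩
    exact norm_nonneg _
  have hmle : ∀ w : ℂ, ‖w‖ = 1 → m ≤ ‖eval w p‖ := by
    intro w hw
    exact csInf_le hbdd (Set.mem_image_of_mem _ ((hmemiff w).mpr hw))
  have hm0 : 0 ≤ m := by
    apply Real.sInf_nonneg
    rintro x ⟨v, _, rfl⟩
    exact norm_nonneg _
  -- pointwise inequality
  have hstar : ∀ z : ℂ, ‖z‖ = 1 →
      ‖(n:ℂ) * eval z p - z * eval z (derivative p)‖ + (n:ℝ) * m
        ≤ ‖eval z (derivative p)‖ := by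
    intro z hz1
    rcases eq_or_lt_of_le hm0 with hm | hm
    · rw [← hm, mul_zero, add_zero]
      exact key_ineq hn hdeg hz hz1
    · obtain ⟨hgrow, hlc⟩ := growth hn hdeg hm hmle hz
      exact star_ineq hn hdeg hm hgrow hlc hz1
  have hpoint : ∀ z : ℂ, ‖z‖ = 1 →
      (n:ℝ) * (‖eval z p‖ + m)
        ≤ 2 * ‖eval z (derivative p)‖ := by
    intro z hz1
    have h1 := hstar z hz1
    have h2 : (n:ℝ) * ‖eval z p‖ = ‖(n:ℂ) * eval z p‖ := by
      rw [norm_mul, Complex.norm_natCast]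
    have h3 : ‖(n:ℂ) * eval z p‖
        ≤ ‖(n:ℂ) * eval z p - z * eval z (derivative p)‖
          + ‖z * eval z (derivative p)‖ := by
      have h5 := norm_add_le
        ((n:ℂ) * eval z p - z * eval z (derivative p)) (z * eval z (derivative p))
      rwa [sub_add_cancel] at h5
    have h4 : ‖z * eval z (derivative p)‖
        = ‖eval z (derivative p)‖ := by
      rw [norm_mul, hz1, one_mul]
    rw [h4] at h3
    rw [mul_add, h2]
    linarith
  -- max point
  obtain ⟨z0, hz0mem, hz0max⟩ := (isCompact_sphere (0:ℂ) 1).exists_isMaxOn hsne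
    hcont.continuousOn
  have hz0abs : ‖z0‖ = 1 := (hmemiff z0).mp hz0mem
  have hmaxeq : polyMaxOn p 1 = ‖eval z0 p‖ := by
    apply le_antisymm
    · apply csSup_le (hsne.image _)
      rintro x ⟨v, hv, rfl⟩
      exact hz0max hv
    · exact le_csSup ((isCompact_sphere (0:ℂ) 1).image hcont).bddAbove
        (Set.mem_image_of_mem _ hz0mem)
  have hmaxd : ‖eval z0 (derivative p)‖ ≤ polyMaxOn (derivative p) 1 :=
    le_csSup ((isCompact_sphere (0:ℂ) 1).image hcont').bddAbove
      (Set.mem_image_of_mem _ hz0mem)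
  have hfinal := hpoint z0 hz0abs
  rw [hmaxeq]
  nlinarith [hfinal, hmaxd]
end

section
/- If p is a complex polynomial of degree n having no zero in the open disk {z : |z| < k} with k ≥ 1, then max_{|z|=1} |p'(z)| ≤ (n/(1+k)) · [max_{|z|=1} |p(z)| − min_{|z|=k} |p(z)|]. -/
open Polynomial Metric

/-- The complex modulus as an absolute value (removed from Mathlib; restored here). -/
noncomputable def Complex.abs : AbsoluteValue ℂ ℝ := NormedField.toAbsoluteValue ℂ

lemma Complex.norm_eq_abs (z : ℂ) : ‖z‖ = Complex.abs z := rfl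

lemma Complex.abs_ofReal (r : ℝ) : Complex.abs (r : ℂ) = |r| := Complex.norm_real r

lemma Complex.abs_natCast (n : ℕ) : Complex.abs (n : ℂ) = n := Complex.norm_natCast n

lemma Complex.sq_abs (z : ℂ) : Complex.abs z ^ 2 = Complex.normSq z := Complex.sq_norm z

lemma Complex.normSq_eq_abs (z : ℂ) : Complex.normSq z = Complex.abs z ^ 2 :=
  Complex.normSq_eq_norm_sq z

lemma Complex.continuous_abs : Continuous Complex.abs := continuous_norm

namespace GovilAux

lemma le_add_eps {a b : ℝ} (h : ∀ ε : ℝ, 0 < ε → a ≤ b + ε) : a ≤ b := by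
  by_contra hc
  push_neg at hc
  have := h ((a - b) / 2) (by linarith)
  linarith

/-- Cauchy–Schwarz for multisets of nonnegative reals -/
lemma ms_cauchy (S : Multiset ℝ) (h : ∀ x ∈ S, 0 ≤ x) :
    S.sum ^ 2 ≤ (Multiset.card S : ℝ) * (S.map (fun x => x ^ 2)).sum := by
  induction S using Multiset.induction with
  | empty => simp
  | cons a s ih =>
    have ha : 0 ≤ a := h a (Multiset.mem_cons_self a s)
    have hs : ∀ x ∈ s, 0 ≤ x := fun x hx => h x (Multiset.mem_cons_of_mem hx)
    have ih' := ih hs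
    have hsum : 0 ≤ s.sum := Multiset.sum_nonneg (by simpa using hs)
    have hsq : 0 ≤ (s.map (fun x => x ^ 2)).sum := by
      apply Multiset.sum_nonneg
      intro x hx
      obtain ⟨y, _, rfl⟩ := Multiset.mem_map.mp hx
      positivity
    have hc : (0 : ℝ) ≤ (Multiset.card s : ℝ) := Nat.cast_nonneg _
    simp only [Multiset.sum_cons, Multiset.map_cons, Multiset.card_cons]
    push_cast
    set c : ℝ := (Multiset.card s : ℝ) with hcdef
    set Sg : ℝ := s.sum with hSgdef
    set T : ℝ := (s.map (fun x => x ^ 2)).sum with hTdef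
    have hq := sq_nonneg (a * c - Sg)
    have hcc : 0 ≤ (c + 1) * (c * T - Sg ^ 2) :=
      mul_nonneg (by linarith) (by linarith [ih'])
    have hcg : 0 ≤ c * ((c + 1) * (a ^ 2 + T) - (a + Sg) ^ 2) := by nlinarith [hq, hcc]
    rcases eq_or_lt_of_le hc with hc0 | hc0
    · have hSg0 : Sg = 0 := by nlinarith [ih', hsum]
      rw [hSg0]
      nlinarith [hsq]
    · nlinarith [hcg, hc0]

lemma ms_sum_le {ι : Type*} (S : Multiset ι) (f g : ι → ℝ) (h : ∀ i ∈ S, f i ≤ g i) :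
    (S.map f).sum ≤ (S.map g).sum := by
  induction S using Multiset.induction with
  | empty => simp
  | cons a s ih =>
    simp only [Multiset.map_cons, Multiset.sum_cons]
    have h1 := h a (Multiset.mem_cons_self a s)
    have h2 := ih (fun i hi => h i (Multiset.mem_cons_of_mem hi))
    linarith

lemma ms_sum_re (S : Multiset ℂ) : S.sum.re = (S.map Complex.re).sum := by
  induction S using Multiset.induction with
  | empty => simp
  | cons a s ih => simp [ih]

lemma ms_abs_sum_le (S : Multiset ℂ) : Complex.abs S.sum ≤ (S.map Complex.abs).sum := by
  induction S using Multiset.induction with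
  | empty => simp
  | cons a s ih =>
    simp only [Multiset.map_cons, Multiset.sum_cons]
    calc Complex.abs (a + s.sum) ≤ Complex.abs a + Complex.abs s.sum :=
          Complex.abs.add_le _ _
      _ ≤ Complex.abs a + (s.map Complex.abs).sum := by linarith

lemma ms_expand (κ : ℝ) (S : Multiset ℂ) :
    (S.map (fun v => κ ^ 2 * ((1 - v.re) ^ 2 + v.im ^ 2))).sum =
      κ ^ 2 * ((Multiset.card S : ℝ) - 2 * (S.map Complex.re).sum
        + (S.map (fun v => v.re ^ 2 + v.im ^ 2)).sum) := by
  induction S using Multiset.induction with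
  | empty => simp
  | cons a s ih =>
    simp only [Multiset.map_cons, Multiset.sum_cons, Multiset.card_cons]
    push_cast
    rw [ih]
    ring

/-- Jensen-type inequality: if every `v ∈ S` satisfies `κ²|1-v|² ≤ |v|²`,
then `κ * |card S - sum S| ≤ |sum S|`. -/
lemma key_abs_ineq (κ : ℝ) (hκ : 1 ≤ κ) (S : Multiset ℂ)
    (h : ∀ v ∈ S, κ ^ 2 * ((1 - v.re) ^ 2 + v.im ^ 2) ≤ v.re ^ 2 + v.im ^ 2) :
    κ * Complex.abs ((Multiset.card S : ℂ) - S.sum) ≤ Complex.abs S.sum := by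
  set V := S.sum with hV
  set n : ℝ := (Multiset.card S : ℝ) with hn
  set A : ℝ := (S.map Complex.re).sum with hA
  set B2 : ℝ := (S.map (fun v => v.re ^ 2 + v.im ^ 2)).sum with hB2
  have hsum : κ ^ 2 * (n - 2 * A + B2) ≤ B2 := by
    have h1 := ms_sum_le S _ _ h
    rw [ms_expand] at h1
    exact h1
  have habs : Complex.abs V ≤ (S.map Complex.abs).sum := ms_abs_sum_le S
  have hcs0 : ((S.map Complex.abs).sum) ^ 2 ≤ n * B2 := by
    have h1 := ms_cauchy (S.map Complex.abs) (by
      intro x hx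
      obtain ⟨y, _, rfl⟩ := Multiset.mem_map.mp hx
      exact Complex.abs.nonneg y)
    rw [Multiset.card_map, Multiset.map_map] at h1
    have h2 : (S.map ((fun x => x ^ 2) ∘ Complex.abs)).sum = B2 := by
      rw [hB2]
      congr 1
      apply Multiset.map_congr rfl
      intro x _
      simp only [Function.comp_apply]
      rw [Complex.sq_abs, Complex.normSq_apply]
      ring
    rw [h2] at h1
    exact h1
  have hVabs : Complex.abs V ^ 2 = V.re ^ 2 + V.im ^ 2 := by
    rw [Complex.sq_abs, Complex.normSq_apply]; ring
  have hre : V.re = A := by rw [hA, hV, ms_sum_re]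
  have hcs : A ^ 2 + V.im ^ 2 ≤ n * B2 := by
    rw [← hre, ← hVabs]
    calc Complex.abs V ^ 2 ≤ ((S.map Complex.abs).sum) ^ 2 :=
          pow_le_pow_left₀ (Complex.abs.nonneg V) habs 2
      _ ≤ n * B2 := hcs0
  have hnV : Complex.abs ((n : ℂ) - V) ^ 2 = (n - V.re) ^ 2 + V.im ^ 2 := by
    rw [Complex.sq_abs, Complex.normSq_apply]
    simp only [Complex.sub_re, Complex.sub_im, Complex.ofReal_re, Complex.ofReal_im]
    ring
  have hn0 : (0 : ℝ) ≤ n := Nat.cast_nonneg _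
  have hcast : ((Multiset.card S : ℕ) : ℂ) = ((n : ℝ) : ℂ) := by
    rw [hn]; push_cast; ring
  rw [hcast]
  have hsq : (κ * Complex.abs ((n : ℝ) - V)) ^ 2 ≤ Complex.abs V ^ 2 := by
    have hnV' : Complex.abs (((n : ℝ) : ℂ) - V) ^ 2 = (n - V.re) ^ 2 + V.im ^ 2 := hnV
    rw [mul_pow, hnV', hVabs, hre]
    nlinarith [mul_le_mul_of_nonneg_left hsum hn0,
      mul_le_mul_of_nonneg_left hcs (by nlinarith : (0:ℝ) ≤ κ ^ 2 - 1)]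
  have h1 : 0 ≤ κ * Complex.abs (((n : ℝ) : ℂ) - V) :=
    mul_nonneg (by linarith) (Complex.abs.nonneg _)
  have h2 : 0 ≤ Complex.abs V := Complex.abs.nonneg _
  nlinarith [hsq, h1, h2]

lemma deriv_prod_eval (S : Multiset ℂ) (z : ℂ) (hz : ∀ r ∈ S, z ≠ r) :
    eval z (derivative (S.map (fun r => X - C r)).prod) =
      eval z ((S.map (fun r => X - C r)).prod) * (S.map (fun r => (z - r)⁻¹)).sum := by
  induction S using Multiset.induction with
  | empty => simp
  | cons a s ih =>
    have hza : z ≠ a := hz a (Multiset.mem_cons_self a s)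
    have hza' : z - a ≠ 0 := sub_ne_zero.mpr hza
    have ih' := ih (fun r hr => hz r (Multiset.mem_cons_of_mem hr))
    simp only [Multiset.map_cons, Multiset.prod_cons, Multiset.sum_cons]
    rw [derivative_mul, derivative_X_sub_C]
    simp only [eval_add, eval_mul, eval_one, eval_sub, eval_X, eval_C, one_mul]
    rw [ih']
    field_simp

/-- Key Lemma (Malik-type): if all zeros of `P` have modulus `≥ κ ≥ 1`, then on the
unit circle `κ |P'(z)| ≤ |n P(z) - z P'(z)|`. -/
lemma keyI (P : Polynomial ℂ) (κ : ℝ) (hκ : 1 ≤ κ) (hP : P ≠ 0)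
    (hroots : ∀ w : ℂ, P.eval w = 0 → κ ≤ Complex.abs w)
    (z : ℂ) (hz1 : Complex.abs z = 1) :
    κ * Complex.abs (eval z (derivative P)) ≤
      Complex.abs ((P.natDegree : ℂ) * P.eval z - z * eval z (derivative P)) := by
  by_cases hPz : P.eval z = 0
  · have h1 : κ ≤ 1 := by
      have := hroots z hPz
      rwa [hz1] at this
    have hκ1 : κ = 1 := le_antisymm h1 hκ
    rw [hPz, hκ1]
    simp only [mul_zero, zero_sub, map_neg_eq_map, map_mul, hz1, one_mul]
    exact le_rfl
  · have hsplits : P.Splits := IsAlgClosed.splits P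
    have hcard : Multiset.card P.roots = P.natDegree := splits_iff_card_roots.mp hsplits
    have hfac : P = C P.leadingCoeff * (P.roots.map (fun a => X - C a)).prod :=
      hsplits.eq_prod_roots
    set S := P.roots with hS
    set c := P.leadingCoeff with hc
    have hzr : ∀ r ∈ S, z ≠ r := by
      intro r hr hzr'
      apply hPz
      rw [hzr']
      exact isRoot_of_mem_roots hr
    set Q : ℂ := eval z ((S.map (fun a => X - C a)).prod) with hQ
    have hQeval : Q = (S.map (fun a => z - a)).prod := by
      rw [hQ, eval_multiset_prod, Multiset.map_map]
      congr 1
      apply Multiset.map_congr rfl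
      intro x _
      simp
    have hQ0 : Q ≠ 0 := by
      rw [hQeval]
      apply Multiset.prod_ne_zero
      intro hmem
      obtain ⟨r, hr, hr0⟩ := Multiset.mem_map.mp hmem
      exact hzr r hr (sub_eq_zero.mp hr0)
    have hc0 : c ≠ 0 := leadingCoeff_ne_zero.mpr hP
    set T : ℂ := (S.map (fun r => (z - r)⁻¹)).sum with hT
    have hPeval : P.eval z = c * Q := by
      conv_lhs => rw [hfac]
      rw [eval_mul, eval_C]
    have hP'eval : eval z (derivative P) = c * Q * T := by
      conv_lhs => rw [hfac]
      rw [derivative_mul, derivative_C, zero_mul, eval_add, eval_zero, zero_add, eval_mul,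
        eval_C, deriv_prod_eval S z hzr]
      rw [← hQ, ← hT]
      ring
    set V : ℂ := (S.map (fun r => -r * (z - r)⁻¹)).sum with hVdef
    have hVsum : z * T + V = (Multiset.card S : ℂ) := by
      rw [hT, ← Multiset.sum_map_mul_left, hVdef, ← Multiset.sum_map_add]
      have hone : (S.map (fun r => z * (z - r)⁻¹ + -r * (z - r)⁻¹)) =
          S.map (fun _ => (1 : ℂ)) := by
        apply Multiset.map_congr rfl
        intro r hr
        have h1 : z - r ≠ 0 := sub_ne_zero.mpr (hzr r hr)
        field_simp
        ring
      rw [hone]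
      simp
    have hterm : ∀ v ∈ S.map (fun r => -r * (z - r)⁻¹),
        κ ^ 2 * ((1 - v.re) ^ 2 + v.im ^ 2) ≤ v.re ^ 2 + v.im ^ 2 := by
      intro v hv
      obtain ⟨r, hr, rfl⟩ := Multiset.mem_map.mp hv
      have hzr' : z - r ≠ 0 := sub_ne_zero.mpr (hzr r hr)
      have hrabs : κ ≤ Complex.abs r := hroots r (isRoot_of_mem_roots hr)
      have e1 : (1 : ℂ) - (-r * (z - r)⁻¹) = z * (z - r)⁻¹ := by
        field_simp
        ring
      have h2 : (1 - (-r * (z - r)⁻¹).re) ^ 2 + (-r * (z - r)⁻¹).im ^ 2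
          = Complex.normSq ((1 : ℂ) - (-r * (z - r)⁻¹)) := by
        rw [Complex.normSq_apply]
        simp only [Complex.sub_re, Complex.sub_im, Complex.one_re, Complex.one_im]
        ring
      have h3 : (-r * (z - r)⁻¹).re ^ 2 + (-r * (z - r)⁻¹).im ^ 2
          = Complex.normSq (-r * (z - r)⁻¹) := by
        rw [Complex.normSq_apply]; ring
      rw [h2, h3, e1, Complex.normSq_mul, Complex.normSq_mul, Complex.normSq_inv,
        Complex.normSq_neg]
      have hz2 : Complex.normSq z = 1 := by
        rw [Complex.normSq_eq_abs, hz1]; norm_num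
      rw [hz2, one_mul]
      have hpos : 0 < Complex.normSq (z - r) := Complex.normSq_pos.mpr hzr'
      have hκr : κ ^ 2 ≤ Complex.normSq r := by
        rw [Complex.normSq_eq_abs]
        exact pow_le_pow_left₀ (le_trans zero_le_one hκ) hrabs 2
      exact mul_le_mul_of_nonneg_right hκr (le_of_lt (inv_pos.mpr hpos))
    have hkey := key_abs_ineq κ hκ (S.map (fun r => -r * (z - r)⁻¹)) hterm
    rw [Multiset.card_map, ← hVdef] at hkey
    have hzT : (Multiset.card S : ℂ) - V = z * T := by
      rw [← hVsum]; ring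
    rw [hzT] at hkey
    -- hkey : κ * abs (z * T) ≤ abs V
    have habsT : Complex.abs (z * T) = Complex.abs T := by
      rw [map_mul, hz1, one_mul]
    rw [habsT] at hkey
    rw [hPeval, hP'eval]
    have hrhs : (P.natDegree : ℂ) * (c * Q) - z * (c * Q * T) = (c * Q) * V := by
      rw [← hcard]
      linear_combination (c * Q) * hzT
    rw [hrhs]
    have e2 : Complex.abs (c * Q * T) = Complex.abs (c * Q) * Complex.abs T :=
      map_mul Complex.abs (c * Q) T
    have e3 : Complex.abs (c * Q * V) = Complex.abs (c * Q) * Complex.abs V :=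
      map_mul Complex.abs (c * Q) V
    rw [e2, e3]
    calc κ * (Complex.abs (c * Q) * Complex.abs T)
        = Complex.abs (c * Q) * (κ * Complex.abs T) := by ring
      _ ≤ Complex.abs (c * Q) * Complex.abs V := by
          apply mul_le_mul_of_nonneg_left hkey
          exact Complex.abs.nonneg _

/-- Maximum modulus principle for polynomials on a disk. -/
lemma max_modulus (p : Polynomial ℂ) {ρ M : ℝ} (hρ : 0 < ρ)
    (hM : ∀ ζ : ℂ, Complex.abs ζ = ρ → Complex.abs (p.eval ζ) ≤ M) :
    ∀ w : ℂ, Complex.abs w ≤ ρ → Complex.abs (p.eval w) ≤ M := by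
  intro w hw
  have h := Complex.norm_le_of_forall_mem_frontier_norm_le
    (U := ball (0 : ℂ) ρ) isBounded_ball
    ((p.differentiable (𝕜 := ℂ)).diffContOnCl)
    (C := M) ?_ (z := w) ?_
  · rwa [Complex.norm_eq_abs] at h
  · intro ζ hζ
    rw [frontier_ball (0 : ℂ) hρ.ne'] at hζ
    rw [mem_sphere_zero_iff_norm] at hζ
    rw [Complex.norm_eq_abs] at hζ ⊢
    exact hM ζ hζ
  · rw [closure_ball (0 : ℂ) hρ.ne', mem_closedBall_zero_iff, Complex.norm_eq_abs]
    exact hw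

/-- Minimum modulus principle for a nonvanishing polynomial on a disk. -/
lemma min_modulus (p : Polynomial ℂ) {ρ m : ℝ} (hρ : 0 < ρ) (hm : 0 < m)
    (hne : ∀ w : ℂ, Complex.abs w ≤ ρ → p.eval w ≠ 0)
    (hms : ∀ ζ : ℂ, Complex.abs ζ = ρ → m ≤ Complex.abs (p.eval ζ)) :
    ∀ w : ℂ, Complex.abs w ≤ ρ → m ≤ Complex.abs (p.eval w) := by
  intro w hw
  have hd : DifferentiableOn ℂ (fun z => (p.eval z)⁻¹) (closure (ball (0 : ℂ) ρ)) := by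
    rw [closure_ball (0 : ℂ) hρ.ne']
    apply DifferentiableOn.inv ((p.differentiable (𝕜 := ℂ)).differentiableOn)
    intro x hx
    rw [mem_closedBall_zero_iff, Complex.norm_eq_abs] at hx
    exact hne x hx
  have h := Complex.norm_le_of_forall_mem_frontier_norm_le
    (U := ball (0 : ℂ) ρ) isBounded_ball hd.diffContOnCl (C := m⁻¹) ?_ (z := w) ?_
  · have hpw : p.eval w ≠ 0 := hne w hw
    rw [norm_inv, Complex.norm_eq_abs] at h
    have hpos : 0 < Complex.abs (p.eval w) := by
      simpa [Complex.abs.pos_iff] using hpw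
    rw [inv_le_inv₀ hpos hm] at h
    · exact h
  · intro ζ hζ
    rw [frontier_ball (0 : ℂ) hρ.ne', mem_sphere_zero_iff_norm, Complex.norm_eq_abs] at hζ
    rw [norm_inv, Complex.norm_eq_abs]
    have h1 := hms ζ hζ
    have hpζ : p.eval ζ ≠ 0 := hne ζ (le_of_eq hζ)
    have hpos : 0 < Complex.abs (p.eval ζ) := by
      simpa [Complex.abs.pos_iff] using hpζ
    rw [inv_le_inv₀ hpos hm]
    · exact h1
  · rw [closure_ball (0 : ℂ) hρ.ne', mem_closedBall_zero_iff, Complex.norm_eq_abs]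
    exact hw

lemma exists_unit (B : ℂ) : ∃ u : ℂ, Complex.abs u = 1 ∧ B = (Complex.abs B : ℂ) * u := by
  by_cases h : B = 0
  · exact ⟨1, by simp, by simp [h]⟩
  · have hB : Complex.abs B ≠ 0 := Complex.abs.ne_zero h
    refine ⟨B / (Complex.abs B : ℂ), ?_, ?_⟩
    · rw [map_div₀, Complex.abs_ofReal, abs_of_nonneg (Complex.abs.nonneg B), div_self hB]
    · rw [mul_div_assoc', mul_comm, mul_div_assoc,
        div_self (Complex.ofReal_ne_zero.mpr hB), mul_one]

end GovilAux

set_option maxHeartbeats 1000000 in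
theorem govil_upper (p : Polynomial ℂ) (n : ℕ) (k : ℝ) (hk : 1 ≤ k)
    (hn : 1 ≤ n) (hdeg : p.natDegree = n)
    (hz : ∀ z : ℂ, p.eval z = 0 → k ≤ ‖z‖) :
    polyMaxOn (derivative p) 1 ≤ (n / (1 + k)) * (polyMaxOn p 1 - polyMinOn p k) := by
  classical
  set M := polyMaxOn p 1 with hMdef
  set m := polyMinOn p k with hmdef
  have hk0 : (0 : ℝ) < k := lt_of_lt_of_le one_pos hk
  have h1k : (0 : ℝ) < 1 + k := by linarith
  have hn0 : (0 : ℝ) < (n : ℝ) := by exact_mod_cast hn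
  have hp0 : p ≠ 0 := by
    intro h
    rw [h, natDegree_zero] at hdeg
    omega
  have hcont : Continuous fun z : ℂ => Complex.abs (p.eval z) :=
    Complex.continuous_abs.comp ((p.differentiable (𝕜 := ℂ)).continuous)
  -- upper bound facts for M
  have hbdd : BddAbove ((fun z => Complex.abs (p.eval z)) '' sphere (0 : ℂ) 1) :=
    (isCompact_sphere (0 : ℂ) 1).bddAbove_image hcont.continuousOn
  have hMub : ∀ ζ : ℂ, Complex.abs ζ = 1 → Complex.abs (p.eval ζ) ≤ M := by
    intro ζ hζ
    apply le_csSup hbdd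
    exact ⟨ζ, by rwa [mem_sphere_zero_iff_norm, Complex.norm_eq_abs], rfl⟩
  have hMle : ∀ w : ℂ, Complex.abs w ≤ 1 → Complex.abs (p.eval w) ≤ M :=
    GovilAux.max_modulus p one_pos hMub
  -- lower bound facts for m
  have hbddb : BddBelow ((fun z => Complex.abs (p.eval z)) '' sphere (0 : ℂ) k) := by
    refine ⟨0, ?_⟩
    rintro x ⟨w, _, rfl⟩
    exact Complex.abs.nonneg _
  have hmlb : ∀ ζ : ℂ, Complex.abs ζ = k → m ≤ Complex.abs (p.eval ζ) := by
    intro ζ hζ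
    apply csInf_le hbddb
    exact ⟨ζ, by rwa [mem_sphere_zero_iff_norm, Complex.norm_eq_abs], rfl⟩
  have hm0 : 0 ≤ m := by
    apply Real.sInf_nonneg
    rintro x ⟨w, _, rfl⟩
    exact Complex.abs.nonneg _
  -- M > 0
  have hM0 : 0 < M := by
    rcases lt_or_ge 0 M with h | h
    · exact h
    · exfalso
      have hall : ∀ w : ℂ, Complex.abs w ≤ 1 → p.eval w = 0 := by
        intro w hw
        have h1 := hMle w hw
        have h2 := Complex.abs.nonneg (p.eval w)
        have : Complex.abs (p.eval w) = 0 := le_antisymm (le_trans h1 h) h2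
        exact Complex.abs.eq_zero.mp this
      have hsub : (fun t : ℝ => (t : ℂ)) '' Set.Icc 0 1 ⊆ {x : ℂ | p.IsRoot x} := by
        rintro x ⟨t, ht, rfl⟩
        apply hall
        rw [Complex.abs_ofReal, abs_of_nonneg ht.1]
        exact ht.2
      have hinf : Set.Infinite ((fun t : ℝ => (t : ℂ)) '' Set.Icc 0 1) :=
        (Set.Icc_infinite (by norm_num : (0:ℝ) < 1)).image
          (Complex.ofReal_injective.injOn)
      exact hp0 (p.eq_zero_of_infinite_isRoot (hinf.mono hsub))
  -- m ≤ M (needed for nonnegativity of RHS)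
  have hplower : 0 < m → ∀ w : ℂ, Complex.abs w ≤ k → m ≤ Complex.abs (p.eval w) := by
    intro hm
    apply GovilAux.min_modulus p hk0 hm ?_ hmlb
    intro w hw hw0
    have h1 := hz w hw0
    have h2 : Complex.abs w = k := le_antisymm hw h1
    have h3 := hmlb w h2
    rw [hw0] at h3
    simp only [map_zero] at h3
    linarith
  have hMm : m ≤ M := by
    rcases eq_or_lt_of_le hm0 with hm | hm
    · rw [← hm]; exact le_of_lt hM0
    · have h1 := hplower hm 1 (by simpa using hk)
      have h2 := hMub 1 (by simp)
      linarith
  -- pointwise estimate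
  have hpt : ∀ z : ℂ, Complex.abs z = 1 →
      (1 + k) * Complex.abs (eval z (derivative p)) ≤ (n : ℝ) * (M - m) := by
    intro z hz1
    set A : ℝ := Complex.abs (eval z (derivative p)) with hAdef
    have hA0 : 0 ≤ A := Complex.abs.nonneg _
    set Bc : ℂ := (n : ℂ) * p.eval z - z * eval z (derivative p) with hBcdef
    -- shifted Malik inequality
    have hshift : ∀ (κ : ℝ), 1 ≤ κ → ∀ c : ℂ, (∀ w : ℂ, p.eval w = c → κ ≤ Complex.abs w) →
        κ * A ≤ Complex.abs (Bc - (n : ℂ) * c) := by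
      intro κ hκ c hc
      have hP : p - C c ≠ 0 := by
        intro h
        have h1 : p = C c := by
          have := sub_eq_zero.mp h
          exact this
        rw [h1, natDegree_C] at hdeg
        omega
      have hroots' : ∀ w : ℂ, (p - C c).eval w = 0 → κ ≤ Complex.abs w := by
        intro w hw
        apply hc
        rw [eval_sub, eval_C, sub_eq_zero] at hw
        exact hw
      have h := GovilAux.keyI (p - C c) κ hκ hP hroots' z hz1
      rw [natDegree_sub_C, hdeg] at h
      have hd : derivative (p - C c) = derivative p := by
        rw [derivative_sub, derivative_C, sub_zero]
      rw [hd] at h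
      have he : ((n : ℕ) : ℂ) * (p - C c).eval z - z * eval z (derivative p)
          = Bc - (n : ℂ) * c := by
        rw [eval_sub, eval_C, hBcdef]
        ring
      rwa [he] at h
    -- Bernstein-type bound: A + |Bc| ≤ n M
    have hBM : Complex.abs Bc ≤ (n : ℝ) * M := by
      by_contra hcon
      push_neg at hcon
      have hc : ∀ w : ℂ, p.eval w = Bc / (n : ℂ) → (1:ℝ) ≤ Complex.abs w := by
        intro w hw
        by_contra hw1
        push_neg at hw1
        have h1 := hMle w (le_of_lt hw1)
        rw [hw, map_div₀, Complex.abs_natCast] at h1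
        rw [div_le_iff₀ hn0] at h1
        nlinarith
      have h := hshift 1 le_rfl (Bc / (n : ℂ)) hc
      rw [one_mul] at h
      have hzero : Bc - (n : ℂ) * (Bc / (n : ℂ)) = 0 := by
        have hne : (n : ℂ) ≠ 0 := Nat.cast_ne_zero.mpr (by omega)
        field_simp
        ring
      rw [hzero, map_zero] at h
      have hA : A = 0 := le_antisymm h hA0
      have hpz : eval z (derivative p) = 0 := Complex.abs.eq_zero.mp hA
      have hBc' : Bc = (n : ℂ) * p.eval z := by
        rw [hBcdef, hpz]
        ring
      rw [hBc', map_mul, Complex.abs_natCast] at hcon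
      have := hMub z hz1
      nlinarith
    have hAB : A + Complex.abs Bc ≤ (n : ℝ) * M := by
      apply GovilAux.le_add_eps
      intro ε hε
      obtain ⟨u, hu1, hBu⟩ := GovilAux.exists_unit Bc
      set c : ℂ := ((((n : ℝ) * M + ε) / n : ℝ) : ℂ) * u with hcdef
      have hcpos : 0 < ((n : ℝ) * M + ε) / n := by positivity
      have hcabs : Complex.abs c = ((n : ℝ) * M + ε) / n := by
        rw [hcdef, map_mul, hu1, mul_one, Complex.abs_ofReal, abs_of_pos hcpos]
      have hc : ∀ w : ℂ, p.eval w = c → (1:ℝ) ≤ Complex.abs w := by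
        intro w hw
        by_contra hw1
        push_neg at hw1
        have h1 := hMle w (le_of_lt hw1)
        rw [hw, hcabs, div_le_iff₀ hn0] at h1
        nlinarith
      have h := hshift 1 le_rfl c hc
      rw [one_mul] at h
      have hcast3 : ((n : ℕ) : ℂ) * (((((n : ℝ) * M + ε) / n) : ℝ) : ℂ)
          = ((((n : ℝ) * M + ε) : ℝ) : ℂ) := by
        have hne : ((n : ℝ) : ℂ) ≠ 0 := by
          simp only [ne_eq, Complex.ofReal_eq_zero]
          linarith
        push_cast
        field_simp
        exact mul_div_cancel_left₀ _ hne
      have heq : Bc - (n : ℂ) * c = ((Complex.abs Bc - ((n : ℝ) * M + ε) : ℝ) : ℂ) * u := by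
        conv_lhs => rw [hBu, hcdef]
        rw [Complex.ofReal_sub]
        linear_combination (-u) * hcast3
      rw [heq, map_mul, hu1, mul_one, Complex.abs_ofReal] at h
      have habs : |Complex.abs Bc - ((n : ℝ) * M + ε)| = (n : ℝ) * M + ε - Complex.abs Bc := by
        rw [abs_of_nonpos (by linarith)]
        ring
      rw [habs] at h
      linarith
    -- now the two cases on m
    rcases eq_or_lt_of_le hm0 with hm | hm
    · -- m = 0
      have hkA : k * A ≤ Complex.abs Bc := by
        have h := hshift k hk 0 (fun w hw => hz w hw)
        simpa using h
      rw [← hm]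
      nlinarith
    · -- 0 < m
      have hlow := hplower hm
      have hshift_m : ∀ lam : ℂ, Complex.abs lam < 1 →
          k * A ≤ Complex.abs (Bc - (n : ℂ) * (lam * (m : ℂ))) := by
        intro lam hlam
        apply hshift k hk
        intro w hw
        by_contra hwk
        push_neg at hwk
        have h2 := hlow w (le_of_lt hwk)
        rw [hw, map_mul, Complex.abs_ofReal, abs_of_pos hm] at h2
        nlinarith
      have hnm0 : (0 : ℝ) < (n : ℝ) * m := by positivity
      by_cases hB : Complex.abs Bc < (n : ℝ) * m
      · -- then A = 0
        set lam : ℂ := Bc / (((n : ℝ) * m : ℝ) : ℂ) with hlamdef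
        have hlam : Complex.abs lam < 1 := by
          rw [hlamdef, map_div₀, Complex.abs_ofReal, abs_of_pos hnm0, div_lt_one hnm0]
          exact hB
        have h := hshift_m lam hlam
        have hzero : Bc - (n : ℂ) * (lam * (m : ℂ)) = 0 := by
          have hcast2 : ((n : ℕ) : ℂ) * ((((n : ℝ) * m : ℝ)) : ℂ)⁻¹ * ((m : ℝ) : ℂ) = 1 := by
            have hn' : ((n : ℝ) : ℂ) ≠ 0 := by
              simp only [ne_eq, Complex.ofReal_eq_zero]; linarith
            have hm' : ((m : ℝ) : ℂ) ≠ 0 := by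
              simp only [ne_eq, Complex.ofReal_eq_zero]; linarith
            push_cast
            field_simp
            exact div_self (by exact_mod_cast hn0.ne')
          rw [hlamdef, div_eq_mul_inv]
          linear_combination (-Bc) * hcast2
        rw [hzero, map_zero] at h
        have hA : A = 0 := by nlinarith
        rw [hA]
        nlinarith
      · push_neg at hB
        have hkey : k * A + (n : ℝ) * m ≤ Complex.abs Bc := by
          by_contra hcon
          push_neg at hcon
          obtain ⟨u, hu1, hBu⟩ := GovilAux.exists_unit Bc
          set s : ℝ := (max (Complex.abs Bc - k * A) 0 + (n : ℝ) * m) / 2 with hsdef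
          have hs0 : 0 ≤ s := by
            have := le_max_right (Complex.abs Bc - k * A) (0 : ℝ)
            rw [hsdef]
            linarith
          have hmaxlt : max (Complex.abs Bc - k * A) 0 < (n : ℝ) * m :=
            max_lt (by linarith) hnm0
          have hsnm : s < (n : ℝ) * m := by
            rw [hsdef]; linarith
          have hsgt : Complex.abs Bc - k * A < s := by
            have := le_max_left (Complex.abs Bc - k * A) (0 : ℝ)
            rw [hsdef]
            linarith
          have hsle : s ≤ Complex.abs Bc := le_trans (le_of_lt hsnm) hB
          set lam : ℂ := ((s / ((n : ℝ) * m) : ℝ) : ℂ) * u with hlamdef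
          have hlam : Complex.abs lam < 1 := by
            rw [hlamdef, map_mul, hu1, mul_one, Complex.abs_ofReal,
              abs_of_nonneg (by positivity), div_lt_one hnm0]
            exact hsnm
          have h := hshift_m lam hlam
          have hcast4 : ((n : ℕ) : ℂ) * (((s / ((n : ℝ) * m)) : ℝ) : ℂ) * ((m : ℝ) : ℂ)
              = ((s : ℝ) : ℂ) := by
            have hn2 : (n : ℝ) ≠ 0 := ne_of_gt hn0
            have hm2 : m ≠ 0 := ne_of_gt hm
            have hr : (n : ℝ) * (s / ((n : ℝ) * m)) * m = s := by
              field_simp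
            calc ((n : ℕ) : ℂ) * (((s / ((n : ℝ) * m)) : ℝ) : ℂ) * ((m : ℝ) : ℂ)
                = (((n : ℝ) * (s / ((n : ℝ) * m)) * m : ℝ) : ℂ) := by push_cast; ring
              _ = ((s : ℝ) : ℂ) := by rw [hr]
          have heq : Bc - (n : ℂ) * (lam * (m : ℂ)) = ((Complex.abs Bc - s : ℝ) : ℂ) * u := by
            conv_lhs => rw [hBu, hlamdef]
            rw [Complex.ofReal_sub]
            linear_combination (-u) * hcast4
          rw [heq, map_mul, hu1, mul_one, Complex.abs_ofReal,
            abs_of_nonneg (by linarith)] at h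
          linarith
        nlinarith
  -- conclude by taking the supremum
  rw [polyMaxOn]
  apply Real.sSup_le
  · rintro x ⟨ζ, hζ, rfl⟩
    rw [mem_sphere_zero_iff_norm, Complex.norm_eq_abs] at hζ
    have h := hpt ζ hζ
    rw [div_mul_eq_mul_div, le_div_iff₀ h1k]
    simp only [Complex.norm_eq_abs]
    nlinarith
  · have h1 : 0 ≤ (n : ℝ) / (1 + k) := by positivity
    have h2 : 0 ≤ M - m := by linarith
    positivity
end

section
/- For the polynomial p(z) = (z^μ + k^μ)^{n/μ} where μ divides n and 0 < k ≤ 1, equality holds in the Aziz–Shah inequality: max_{|z|=1} |p'(z)| = (n/(1+k^μ)) · [max_{|z|=1} |p(z)| + (1/k^{n−μ}) · min_{|z|=k} |p(z)|]. -/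
open Metric

theorem aziz_shah_sharp (n μ : ℕ) (k : ℝ) (hk0 : 0 < k) (hk : k ≤ 1)
    (hμ1 : 1 ≤ μ) (hμn : μ ∣ n)
    (p : ℂ → ℂ) (hp : p = fun z => (z ^ μ + (k : ℂ) ^ μ) ^ (n / μ)) :
    sSup ((fun z => ‖deriv p z‖) '' sphere (0 : ℂ) 1) =
      (n / (1 + k ^ μ)) *
        (sSup ((fun z => ‖p z‖) '' sphere (0 : ℂ) 1) +
          (1 / k ^ (n - μ)) * sInf ((fun z => ‖p z‖) '' sphere (0 : ℂ) k)) := by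
  subst hp
  set m := n / μ with hm
  have hμ0 : (μ : ℂ) ≠ 0 := Nat.cast_ne_zero.mpr (by omega)
  have hmn : m * μ = n := Nat.div_mul_cancel hμn
  have hK : 0 < 1 + k ^ μ := by positivity
  have hkc : ‖(k : ℂ) ^ μ‖ = k ^ μ := by
    rw [norm_pow, Complex.norm_real, Real.norm_eq_abs, abs_of_pos hk0]
  have habs1 : ‖(1:ℂ) + (k:ℂ) ^ μ‖ = 1 + k ^ μ := by
    have h : (1 : ℂ) + (k:ℂ) ^ μ = ((1 + k ^ μ : ℝ) : ℂ) := by push_cast; ring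
    rw [h, Complex.norm_real, Real.norm_eq_abs, abs_of_pos hK]
  have hderiv : ∀ z : ℂ, deriv (fun z => (z ^ μ + (k:ℂ) ^ μ) ^ m) z
      = m * (z ^ μ + (k:ℂ) ^ μ) ^ (m - 1) * (μ * z ^ (μ - 1)) :=
    fun z => (((hasDerivAt_pow μ z).add_const _).pow m).deriv
  have hboundp : ∀ z ∈ sphere (0:ℂ) 1, ‖z ^ μ + (k:ℂ)^μ‖ ≤ 1 + k ^ μ := by
    intro z hz
    rw [mem_sphere_zero_iff_norm] at hz
    calc ‖z ^ μ + (k:ℂ)^μ‖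
        ≤ ‖z^μ‖ + ‖(k:ℂ)^μ‖ := norm_add_le _ _
      _ = 1 + k ^ μ := by rw [norm_pow, hz, one_pow, hkc]
  have h1mem : (1:ℂ) ∈ sphere (0:ℂ) 1 := mem_sphere_zero_iff_norm.mpr (by simp)
  have hsupp : sSup ((fun z => ‖(z ^ μ + (k:ℂ)^μ) ^ m‖) '' sphere (0:ℂ) 1)
      = (1 + k ^ μ) ^ m := by
    apply IsGreatest.csSup_eq
    constructor
    · exact ⟨1, h1mem, by dsimp only; rw [norm_pow, one_pow, habs1]⟩
    · rintro x ⟨z, hz, rfl⟩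
      dsimp only
      rw [norm_pow]
      exact pow_le_pow_left₀ (norm_nonneg _) (hboundp z hz) m
  have hsupd : sSup ((fun z => ‖deriv (fun z => (z ^ μ + (k:ℂ)^μ) ^ m) z‖) '' sphere (0:ℂ) 1)
      = n * (1 + k ^ μ) ^ (m - 1) := by
    apply IsGreatest.csSup_eq
    constructor
    · refine ⟨1, h1mem, ?_⟩
      dsimp only
      rw [hderiv, one_pow, one_pow, mul_one, norm_mul, norm_mul, norm_pow, habs1,
        Complex.norm_natCast, Complex.norm_natCast, ← hmn]
      push_cast; ring
    · rintro x ⟨z, hz, rfl⟩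
      have hz1 : ‖z‖ = 1 := by
        rwa [mem_sphere_zero_iff_norm] at hz
      dsimp only
      rw [hderiv, norm_mul, norm_mul, norm_mul, norm_pow, norm_pow, hz1, one_pow, mul_one,
        Complex.norm_natCast, Complex.norm_natCast]
      calc (m:ℝ) * ‖z ^ μ + (k:ℂ)^μ‖ ^ (m-1) * μ
          = n * ‖z ^ μ + (k:ℂ)^μ‖ ^ (m-1) := by rw [← hmn]; push_cast; ring
        _ ≤ n * (1 + k ^ μ) ^ (m - 1) := by
            gcongr
            exact hboundp z hz
  rw [hsupd, hsupp]
  rcases Nat.eq_zero_or_pos m with hm0 | hm1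
  · have hn0 : n = 0 := by rw [← hmn, hm0, zero_mul]
    simp [hn0]
  · have hinf : sInf ((fun z => ‖(z ^ μ + (k:ℂ)^μ) ^ m‖) '' sphere (0:ℂ) k)
        = 0 := by
      apply le_antisymm
      · apply csInf_le ⟨0, by rintro x ⟨z, _, rfl⟩; exact norm_nonneg _⟩
        refine ⟨(k:ℂ) * Complex.exp ((Real.pi / μ : ℝ) * Complex.I), ?_, ?_⟩
        · rw [mem_sphere_zero_iff_norm, norm_mul, Complex.norm_exp_ofReal_mul_I, mul_one,
            Complex.norm_real, Real.norm_eq_abs, abs_of_pos hk0]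
        · have hz : ((k:ℂ) * Complex.exp ((Real.pi / μ : ℝ) * Complex.I)) ^ μ
              = -(k:ℂ)^μ := by
            rw [mul_pow, ← Complex.exp_nat_mul]
            have h : (μ:ℂ) * (((Real.pi / μ : ℝ) : ℂ) * Complex.I)
                = (Real.pi : ℂ) * Complex.I := by
              push_cast
              field_simp
            rw [h, Complex.exp_pi_mul_I]
            ring
          show ‖(((k:ℂ) * Complex.exp ((Real.pi / μ : ℝ) * Complex.I)) ^ μ
              + (k:ℂ)^μ) ^ m‖ = 0
          rw [hz, neg_add_cancel, zero_pow (by omega : m ≠ 0), norm_zero]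
      · refine le_csInf ⟨_, ⟨(k:ℂ), mem_sphere_zero_iff_norm.mpr (by
            simp [abs_of_pos hk0]), rfl⟩⟩ ?_
        rintro x ⟨z, _, rfl⟩
        exact norm_nonneg _
    rw [hinf, mul_zero, add_zero, div_mul_eq_mul_div, eq_div_iff hK.ne',
      mul_assoc, ← pow_succ, Nat.sub_add_cancel hm1]
end

section
/- If p is a complex polynomial of degree n and q(z) = z^n · conj(p(1/conj(z))), then for every z with |z| = 1, |n·p(z) − z·p'(z)| = |q'(z)|. -/
open Polynomial Metric

private lemma eval_map_conj' (p : Polynomial ℂ) (x : ℂ) :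
    (p.map (starRingEnd ℂ)).eval x
      = (starRingEnd ℂ) (p.eval ((starRingEnd ℂ) x)) := by
  rw [eval_map]
  conv_lhs => rw [show x = (starRingEnd ℂ) ((starRingEnd ℂ) x) by simp]
  exact eval₂_at_apply (starRingEnd ℂ) _

private lemma eval_reflect (f : Polynomial ℂ) (N : ℕ) (hf : f.natDegree ≤ N)
    (z : ℂ) (hz : z ≠ 0) :
    (reflect N f).eval z = z ^ N * f.eval z⁻¹ := by
  haveI : Invertible (z⁻¹) := invertibleOfNonzero (inv_ne_zero hz)
  have h := eval₂_reflect_mul_pow (RingHom.id ℂ) (z⁻¹) N f hf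
  rw [invOf_eq_inv, inv_inv] at h
  simp only [eval₂_eq_eval_map, Polynomial.map_id] at h
  rw [← h, inv_pow]
  field_simp

private lemma coeff_h (p : Polynomial ℂ) (n j : ℕ) :
    (C (n : ℂ) * p - X * derivative p).coeff j = ((n : ℂ) - (j : ℂ)) * p.coeff j := by
  cases j with
  | zero => simp [coeff_X_mul]  -- coeff 0 of X * f is 0
  | succ j =>
    rw [coeff_sub, coeff_C_mul, coeff_X_mul, coeff_derivative]
    push_cast
    ring

theorem reciprocal_derivative_identity (p q : Polynomial ℂ) (n : ℕ) (hn : 1 ≤ n)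
    (hdeg : p.natDegree = n)
    (hq : ∀ z : ℂ, z ≠ 0 →
      q.eval z = z ^ n * (starRingEnd ℂ) (p.eval ((starRingEnd ℂ) z)⁻¹)) :
    ∀ z : ℂ, ‖z‖ = 1 →
      ‖(n : ℂ) * p.eval z - z * (derivative p).eval z‖ =
        ‖(derivative q).eval z‖ := by
  set σ := starRingEnd ℂ with hσ
  set g : Polynomial ℂ := p.map σ with hg
  have hgdeg : g.natDegree ≤ n := by
    rw [hg, ← hdeg]; exact natDegree_map_le
  set h : Polynomial ℂ := C (n : ℂ) * p - X * derivative p with hh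
  have hhdeg : h.natDegree ≤ n - 1 := by
    apply natDegree_le_iff_coeff_eq_zero.2
    intro m hm
    rw [hh, coeff_h]
    have hmn : n ≤ m := by omega
    rcases lt_or_eq_of_le hmn with hlt | heq
    · have : p.coeff m = 0 := coeff_eq_zero_of_natDegree_lt (hdeg ▸ hlt)
      simp [this]
    · subst heq; ring
  -- Step 1: q = reflect n g
  have hq_eq : q = reflect n g := by
    apply eq_of_infinite_eval_eq
    apply Set.Infinite.mono (s := {(0 : ℂ)}ᶜ)
    · intro z hz
      have hz : z ≠ 0 := hz
      show q.eval z = _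
      rw [hq z hz, eval_reflect g n hgdeg z hz, hg, eval_map_conj']
      rw [map_inv₀]
    · exact Set.Finite.infinite_compl (Set.finite_singleton 0)
  -- Step 2: derivative q = reflect (n-1) (map σ h)
  have hd : derivative q = reflect (n - 1) (h.map σ) := by
    rw [hq_eq]
    ext i
    rw [coeff_derivative, coeff_reflect, coeff_reflect, coeff_map, coeff_map, coeff_h]
    by_cases hi : i + 1 ≤ n
    · rw [revAt_le hi, revAt_le (by omega : i ≤ n - 1)]
      have : n - (i + 1) = n - 1 - i := by omega
      rw [this]
      have hc : ((n : ℂ) - ((n - 1 - i : ℕ) : ℂ)) = ((i : ℂ) + 1) := by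
        have : (n : ℂ) = ((n - 1 - i : ℕ) : ℂ) + ((i + 1 : ℕ) : ℂ) := by
          rw [← Nat.cast_add]; congr 1; omega
        rw [this]; push_cast; ring
      rw [map_mul, hc]
      simp [mul_comm]
    · have h1 : revAt n (i + 1) = i + 1 := revAt_eq_self_of_lt (by omega)
      have h2 : revAt (n - 1) i = i := revAt_eq_self_of_lt (by omega)
      rw [h1, h2]
      have hp1 : p.coeff (i + 1) = 0 :=
        coeff_eq_zero_of_natDegree_lt (by rw [hdeg]; omega)
      have hpi : ((n : ℂ) - (i : ℂ)) * p.coeff i = 0 := by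
        rcases eq_or_lt_of_le (show n ≤ i by omega) with heq | hlt
        · rw [← heq, sub_self, zero_mul]
        · rw [coeff_eq_zero_of_natDegree_lt (by rw [hdeg]; exact hlt), mul_zero]
      simp [hp1, hpi]
  -- Step 3: evaluate
  intro z hz1
  have hz0 : z ≠ 0 := by
    intro h0; rw [h0] at hz1; simp at hz1
  have hzinv : z⁻¹ = σ z := by
    have h1 : σ z * z = 1 := by
      rw [hσ, mul_comm, Complex.mul_conj, Complex.normSq_eq_norm_sq, hz1]
      norm_num
    exact inv_eq_of_mul_eq_one_left h1
  rw [hd, eval_reflect _ _ (natDegree_map_le.trans hhdeg) z hz0]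
  rw [eval_map_conj', norm_mul, norm_pow]
  rw [hz1, one_pow, one_mul, Complex.norm_conj]
  congr 1
  have : σ z⁻¹ = z := by
    rw [map_inv₀, ← hzinv, inv_inv]
  rw [this, hh]
  simp
end
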